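/- arXiv:2509.19961 — 6 statements merged into one kernel-verified Lean document; each statement's English description precedes it below -/
import Mathlib

section
/- X^∞ is dense in [0,1], and (X^∞, <) with the order induced from ℝ is order-isomorphic to (ℚ, <). -/
/-- The set `X = { 1/i : i ≥ 3 } ∪ { 1 - 1/i : i ≥ 3 } ⊂ (0,1)`. -/
def Xset : Set ℝ :=
  {x | ∃ i : ℕ, 3 ≤ i ∧ (x = 1 / (i : ℝ) ∨ x = 1 - 1 / (i : ℝ))}

/-- The order preserving bijection `h : ℤ → X`. -/
noncomputable def hFun (n : ℤ) : ℝ :=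
  if 0 < n then 1 - 1 / (2 + (n : ℝ)) else 1 / (3 + |(n : ℝ)|)

/-- `gSingle n : [0,1] → I_n = [h n, h (n+1)]` is the unique increasing affine bijection. -/
noncomputable def gSingle (n : ℤ) (x : ℝ) : ℝ :=
  (hFun (n + 1) - hFun n) * x + hFun n

/-- `gSeq (n₁, …, n_k)` is the unique increasing affine bijection from `[0,1]` onto the
interval `I_{(n₁,…,n_k)}`; it is the composition `g_{n₁} ∘ ⋯ ∘ g_{n_k}` read correctly,
using `I_{(n₁,…,n_{k+1})} = g_{(n₁,…,n_k)}(I_{n_{k+1}})`. For the empty sequence it is the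
identity of `[0,1]`. -/
noncomputable def gSeq : List ℤ → ℝ → ℝ
  | [] => id
  | n :: L => gSingle n ∘ gSeq L

/-- `X^∞ = ⋃_{k ≥ 0} X⁽ᵏ⁾`, where `X⁽⁰⁾ = X` and
`X⁽ᵏ⁾ = ⋃_{(n₁,…,n_k) ∈ ℤᵏ} g_{(n₁,…,n_k)}(X)`. -/
def Xinf : Set ℝ := ⋃ L : List ℤ, gSeq L '' Xset

/- ### Auxiliary lemmas -/

lemma hFun_of_pos {n : ℤ} (hn : 0 < n) : hFun n = 1 - 1 / (2 + (n : ℝ)) := if_pos hn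

lemma hFun_of_nonpos {n : ℤ} (hn : n ≤ 0) : hFun n = 1 / (3 + -(n : ℝ)) := by
  rw [hFun, if_neg (not_lt.mpr hn), abs_of_nonpos (by exact_mod_cast hn)]

lemma hFun_pos (n : ℤ) : 0 < hFun n := by
  rcases lt_or_ge 0 n with h | h
  · rw [hFun_of_pos h]
    have h1 : (1 : ℝ) ≤ (n : ℝ) := by exact_mod_cast h
    have h2 : 1 / (2 + (n : ℝ)) < 1 := by
      rw [div_lt_one (by linarith)]; linarith
    linarith
  · rw [hFun_of_nonpos h]
    have h1 : (n : ℝ) ≤ 0 := by exact_mod_cast h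
    exact one_div_pos.mpr (by linarith)

lemma hFun_lt_one (n : ℤ) : hFun n < 1 := by
  rcases lt_or_ge 0 n with h | h
  · rw [hFun_of_pos h]
    have h1 : (1 : ℝ) ≤ (n : ℝ) := by exact_mod_cast h
    have h2 : 0 < 1 / (2 + (n : ℝ)) := one_div_pos.mpr (by linarith)
    linarith
  · rw [hFun_of_nonpos h]
    have h1 : (n : ℝ) ≤ 0 := by exact_mod_cast h
    rw [div_lt_one (by linarith)]; linarith

lemma hFun_lt_succ (n : ℤ) : hFun n < hFun (n + 1) := by
  rcases lt_trichotomy 0 n with h | h | h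
  · rw [hFun_of_pos h, hFun_of_pos (by omega)]
    have h1 : (1 : ℝ) ≤ (n : ℝ) := by exact_mod_cast h
    push_cast
    have h2 : 1 / (2 + ((n : ℝ) + 1)) < 1 / (2 + (n : ℝ)) := by
      rw [div_lt_div_iff₀ (by linarith) (by linarith)]; linarith
    linarith
  · subst h
    rw [hFun_of_nonpos le_rfl, hFun_of_pos (by omega)]
    norm_num
  · rw [hFun_of_nonpos (by omega), hFun_of_nonpos (by omega)]
    have h1 : (n : ℝ) ≤ -1 := by exact_mod_cast (by omega : n ≤ -1)
    push_cast
    rw [div_lt_div_iff₀ (by linarith) (by linarith)]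
    linarith

lemma hFun_strictMono : StrictMono hFun := strictMono_int_of_lt_succ hFun_lt_succ

lemma hFun_gap_le (n : ℤ) : hFun (n + 1) - hFun n ≤ 1 / 3 := by
  rcases lt_trichotomy 0 n with h | h | h
  · rw [hFun_of_pos h, hFun_of_pos (by omega)]
    have h1 : (1 : ℝ) ≤ (n : ℝ) := by exact_mod_cast h
    push_cast
    have h2 : 0 < 1 / (2 + ((n : ℝ) + 1)) := one_div_pos.mpr (by linarith)
    have h3 : 1 / (2 + (n : ℝ)) ≤ 1 / 3 := by
      rw [div_le_div_iff₀ (by linarith) (by norm_num)]; linarith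
    linarith
  · subst h
    rw [hFun_of_nonpos le_rfl, hFun_of_pos (by omega)]
    norm_num
  · rw [hFun_of_nonpos (by omega), hFun_of_nonpos (by omega)]
    have h1 : (n : ℝ) ≤ -1 := by exact_mod_cast (by omega : n ≤ -1)
    push_cast
    have h2 : 0 < 1 / (3 + -(n : ℝ)) := one_div_pos.mpr (by linarith)
    have h3 : 1 / (3 + -((n : ℝ) + 1)) ≤ 1 / 3 := by
      rw [div_le_div_iff₀ (by linarith) (by norm_num)]; linarith
    linarith

lemma hFun_mem_Xset (n : ℤ) : hFun n ∈ Xset := by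
  rcases lt_or_ge 0 n with h | h
  · refine ⟨(2 + n).toNat, by omega, Or.inr ?_⟩
    have h1 : (((2 + n).toNat : ℕ) : ℝ) = 2 + (n : ℝ) := by
      have h2 : (((2 + n).toNat : ℕ) : ℤ) = 2 + n := Int.toNat_of_nonneg (by omega)
      exact_mod_cast congrArg (fun z : ℤ => (z : ℝ)) h2
    rw [hFun_of_pos h, h1]
  · refine ⟨(3 - n).toNat, by omega, Or.inl ?_⟩
    have h1 : (((3 - n).toNat : ℕ) : ℝ) = 3 - (n : ℝ) := by
      have h2 : (((3 - n).toNat : ℕ) : ℤ) = 3 - n := Int.toNat_of_nonneg (by omega)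
      exact_mod_cast congrArg (fun z : ℤ => (z : ℝ)) h2
    rw [hFun_of_nonpos h, h1]
    ring_nf

lemma Xset_subset_Ioo : Xset ⊆ Set.Ioo (0 : ℝ) 1 := by
  rintro x ⟨i, hi, h | h⟩ <;>
    · have h3 : (3 : ℝ) ≤ (i : ℝ) := by exact_mod_cast hi
      have h4 : 0 < 1 / (i : ℝ) := one_div_pos.mpr (by linarith)
      have h5 : 1 / (i : ℝ) ≤ 1 / 3 := by
        rw [div_le_div_iff₀ (by linarith) (by norm_num)]; linarith
      subst h
      constructor <;> linarith

lemma Xset_subset_Xinf : Xset ⊆ Xinf := fun x hx =>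
  Set.mem_iUnion.mpr ⟨[], ⟨x, hx, rfl⟩⟩

lemma gSingle_mem_Xinf {n : ℤ} {p : ℝ} (hp : p ∈ Xinf) : gSingle n p ∈ Xinf := by
  obtain ⟨_, ⟨L, rfl⟩, y, hy, rfl⟩ := hp
  exact Set.mem_iUnion.mpr ⟨n :: L, ⟨y, hy, rfl⟩⟩

lemma gSingle_mem_Ioo {n : ℤ} {x : ℝ} (hx : x ∈ Set.Ioo (0 : ℝ) 1) :
    gSingle n x ∈ Set.Ioo (0 : ℝ) 1 := by
  have hc : 0 < hFun (n + 1) - hFun n := sub_pos.mpr (hFun_lt_succ n)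
  have h0 := hFun_pos n
  have h1 := hFun_lt_one (n + 1)
  obtain ⟨hx0, hx1⟩ := hx
  constructor
  · unfold gSingle; nlinarith
  · unfold gSingle; nlinarith

lemma gSeq_mem_Ioo (L : List ℤ) {x : ℝ} (hx : x ∈ Set.Ioo (0 : ℝ) 1) :
    gSeq L x ∈ Set.Ioo (0 : ℝ) 1 := by
  induction L with
  | nil => exact hx
  | cons n L ih => exact gSingle_mem_Ioo ih

lemma Xinf_subset_Ioo : Xinf ⊆ Set.Ioo (0 : ℝ) 1 := by
  rintro x hx
  obtain ⟨_, ⟨L, rfl⟩, y, hy, rfl⟩ := hx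
  exact gSeq_mem_Ioo L (Xset_subset_Ioo hy)

lemma exists_cover {x : ℝ} (hx : x ∈ Set.Ioo (0 : ℝ) 1) :
    ∃ n : ℤ, hFun n ≤ x ∧ x < hFun (n + 1) := by
  classical
  obtain ⟨hx0, hx1⟩ := hx
  have hlow : ∃ n : ℤ, hFun n ≤ x := by
    refine ⟨-(⌈1 / x⌉₊ : ℤ), ?_⟩
    rw [hFun_of_nonpos (by simp)]
    have h1 : 1 / x ≤ (⌈1 / x⌉₊ : ℝ) := Nat.le_ceil _
    rw [div_le_iff₀ hx0] at h1
    push_cast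
    rw [neg_neg, div_le_iff₀ (by positivity)]
    nlinarith
  have hup : ∃ m : ℤ, x < hFun m := by
    refine ⟨(⌈1 / (1 - x)⌉₊ : ℤ) + 1, ?_⟩
    rw [hFun_of_pos (by positivity)]
    have h1 : 1 / (1 - x) ≤ (⌈1 / (1 - x)⌉₊ : ℝ) := Nat.le_ceil _
    rw [div_le_iff₀ (by linarith)] at h1
    have h2 : 1 / (2 + (((⌈1 / (1 - x)⌉₊ : ℤ) + 1 : ℤ) : ℝ)) < 1 - x := by
      push_cast
      rw [div_lt_iff₀ (by positivity)]
      nlinarith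
    linarith
  obtain ⟨m, hm⟩ := hup
  obtain ⟨n, hn, hgr⟩ := Int.exists_greatest_of_bdd
    (P := fun n => hFun n ≤ x)
    ⟨m, fun z hz => le_of_not_gt fun h =>
      absurd hz (not_le.mpr (lt_trans hm (hFun_strictMono h)))⟩ hlow
  refine ⟨n, hn, lt_of_not_ge fun h => ?_⟩
  have := hgr (n + 1) h
  omega

lemma approx : ∀ k : ℕ, ∀ x ∈ Set.Ioo (0 : ℝ) 1, ∃ p ∈ Xinf, |x - p| ≤ (1 / 3 : ℝ) ^ (k + 1) := by
  intro k
  induction k with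
  | zero =>
    intro x hx
    obtain ⟨n, h1, h2⟩ := exists_cover hx
    refine ⟨hFun n, Xset_subset_Xinf (hFun_mem_Xset n), ?_⟩
    rw [abs_of_nonneg (by linarith)]
    have h3 := hFun_gap_le n
    rw [pow_one]
    linarith
  | succ k ih =>
    intro x hx
    obtain ⟨n, h1, h2⟩ := exists_cover hx
    rcases eq_or_lt_of_le h1 with heq | hlt
    · exact ⟨hFun n, Xset_subset_Xinf (hFun_mem_Xset n), by
        rw [← heq, sub_self, abs_zero]; positivity⟩
    · have hc0 : 0 < hFun (n + 1) - hFun n := sub_pos.mpr (hFun_lt_succ n)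
      have hc3 : hFun (n + 1) - hFun n ≤ 1 / 3 := hFun_gap_le n
      set c := hFun (n + 1) - hFun n with hc
      set y := (x - hFun n) / c with hy
      have hy0 : 0 < y := div_pos (by linarith) hc0
      have hy1 : y < 1 := (div_lt_one hc0).mpr (by linarith)
      obtain ⟨p, hp, hpd⟩ := ih y ⟨hy0, hy1⟩
      refine ⟨gSingle n p, gSingle_mem_Xinf hp, ?_⟩
      have hxy : x = c * y + hFun n := by
        rw [hy]; field_simp; ring
      have hgp : gSingle n p = c * p + hFun n := by rw [gSingle]
      rw [hxy, hgp]
      have h4 : c * y + hFun n - (c * p + hFun n) = c * (y - p) := by ring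
      rw [h4, abs_mul, abs_of_pos hc0]
      calc c * |y - p| ≤ (1 / 3) * (1 / 3 : ℝ) ^ (k + 1) :=
            mul_le_mul hc3 hpd (abs_nonneg _) (by norm_num)
        _ = (1 / 3 : ℝ) ^ (k + 1 + 1) := by ring

lemma Xinf_dense : ∀ x ∈ Set.Icc (0 : ℝ) 1, x ∈ closure Xinf := by
  intro x hx
  rw [Metric.mem_closure_iff]
  intro ε hε
  rcases eq_or_lt_of_le hx.1 with h0 | h0
  · -- x = 0
    refine ⟨hFun (-(⌈1 / ε⌉₊ : ℤ)), Xset_subset_Xinf (hFun_mem_Xset _), ?_⟩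
    rw [hFun_of_nonpos (by simp), Real.dist_eq, ← h0]
    have h1 : 1 / ε ≤ (⌈1 / ε⌉₊ : ℝ) := Nat.le_ceil _
    rw [div_le_iff₀ hε] at h1
    push_cast
    rw [neg_neg, zero_sub, abs_neg, abs_of_pos (by positivity), div_lt_iff₀ (by positivity)]
    nlinarith
  rcases eq_or_lt_of_le hx.2 with h1 | h1
  · -- x = 1
    refine ⟨hFun ((⌈1 / ε⌉₊ : ℤ) + 1), Xset_subset_Xinf (hFun_mem_Xset _), ?_⟩
    rw [hFun_of_pos (by positivity), Real.dist_eq, h1]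
    have h2 : 1 / ε ≤ (⌈1 / ε⌉₊ : ℝ) := Nat.le_ceil _
    rw [div_le_iff₀ hε] at h2
    push_cast
    have h3 : (1 : ℝ) - (1 - 1 / (2 + ((⌈1 / ε⌉₊ : ℝ) + 1))) = 1 / (3 + (⌈1 / ε⌉₊ : ℝ)) := by
      ring_nf
    rw [h3, abs_of_pos (by positivity), div_lt_iff₀ (by positivity)]
    nlinarith
  · obtain ⟨k, hk⟩ := exists_pow_lt_of_lt_one hε (by norm_num : (1 / 3 : ℝ) < 1)
    obtain ⟨p, hp, hpd⟩ := approx k x ⟨h0, h1⟩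
    refine ⟨p, hp, ?_⟩
    rw [Real.dist_eq]
    calc |x - p| ≤ (1 / 3 : ℝ) ^ (k + 1) := hpd
      _ ≤ (1 / 3 : ℝ) ^ k := pow_le_pow_of_le_one (by norm_num) (by norm_num) (Nat.le_succ k)
      _ < ε := hk

lemma Xinf_countable : Xinf.Countable := by
  refine Set.countable_iUnion fun L => Set.Countable.image ?_ _
  have hsub : Xset ⊆ Set.range (fun i : ℕ => 1 / (i : ℝ)) ∪
      Set.range (fun i : ℕ => 1 - 1 / (i : ℝ)) := by
    rintro x ⟨i, _, h | h⟩
    · exact Or.inl ⟨i, h.symm⟩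
    · exact Or.inr ⟨i, h.symm⟩
  exact Set.Countable.mono hsub ((Set.countable_range _).union (Set.countable_range _))

/-- Between any two points of `[0,1]` there is a point of `Xinf`. -/
lemma Xinf_between {a b : ℝ} (ha : 0 ≤ a) (hb : b ≤ 1) (hab : a < b) :
    ∃ p ∈ Xinf, a < p ∧ p < b := by
  have hm : (a + b) / 2 ∈ Set.Icc (0 : ℝ) 1 := ⟨by linarith, by linarith⟩
  have hcl := Xinf_dense _ hm
  rw [Metric.mem_closure_iff] at hcl
  obtain ⟨p, hp, hd⟩ := hcl ((b - a) / 2) (by linarith)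
  rw [Real.dist_eq, abs_lt] at hd
  exact ⟨p, hp, by constructor <;> linarith [hd.1, hd.2]⟩

/-- `X^∞` is dense in `[0,1]`, and `(X^∞, <)` with the order induced
from `ℝ` is order-isomorphic to `(ℚ, <)`. -/
theorem stmt2 :
    (∀ x ∈ Set.Icc (0 : ℝ) 1, x ∈ closure Xinf) ∧ Nonempty (↥Xinf ≃o ℚ) := by
  refine ⟨Xinf_dense, ?_⟩
  haveI : Countable ↥Xinf := Xinf_countable.to_subtype
  haveI : Nonempty ↥Xinf :=
    ⟨⟨hFun 0, Xset_subset_Xinf (hFun_mem_Xset 0)⟩⟩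
  haveI : DenselyOrdered ↥Xinf := by
    refine ⟨fun a b hab => ?_⟩
    have ha := Xinf_subset_Ioo a.2
    have hb := Xinf_subset_Ioo b.2
    obtain ⟨p, hp, h1, h2⟩ := Xinf_between (le_of_lt ha.1) (le_of_lt hb.2)
      (Subtype.coe_lt_coe.mpr hab)
    exact ⟨⟨p, hp⟩, Subtype.coe_lt_coe.mp h1, Subtype.coe_lt_coe.mp h2⟩
  haveI : NoMinOrder ↥Xinf := by
    refine ⟨fun a => ?_⟩
    have ha := Xinf_subset_Ioo a.2
    obtain ⟨p, hp, _, h2⟩ := Xinf_between (le_refl 0) (le_of_lt ha.2) ha.1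
    exact ⟨⟨p, hp⟩, Subtype.coe_lt_coe.mp h2⟩
  haveI : NoMaxOrder ↥Xinf := by
    refine ⟨fun a => ?_⟩
    have ha := Xinf_subset_Ioo a.2
    obtain ⟨p, hp, h1, _⟩ := Xinf_between (le_of_lt ha.1) (le_refl 1) ha.2
    exact ⟨⟨p, hp⟩, Subtype.coe_lt_coe.mp h1⟩
  exact Order.iso_of_countable_dense ↥Xinf ℚ
end

section
/- There exists t₀ > 0 such that for every (m,n) ∈ ℤ² with m ≥ 1, n ≥ 0, and t_{(m,n)} ≥ t₀: the interior of R_{(m,n)} contains no point of ℤ² if and only if the pair (n, m) is a good lower approximation of the second kind of α or a good upper approximation of the second kind of α. -/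
set_option maxHeartbeats 1600000


/-- `t_{(m,n)} = (n − βm)/(α − β)`, the coordinate of `(m,n)` along the direction `(1,α)`
in the basis `(1,α), (1,β)`. -/
noncomputable def tcoord (α β : ℝ) (m n : ℤ) : ℝ := ((n : ℝ) - β * m) / (α - β)

/-- `s_{(m,n)} = (αm − n)/(α − β)`, the coordinate of `(m,n)` along the direction `(1,β)`. -/
noncomputable def scoord (α β : ℝ) (m n : ℤ) : ℝ := (α * m - (n : ℝ)) / (α - β)

/-- The parallelogram `R_{(m,n)}` with opposite vertices `(0,0)` and `(m,n)` whose sides are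
parallel to `(1,α)` and `(1,β)`:
`{a·(1,α) + b·(1,β) : a between 0 and t_{(m,n)}, b between 0 and s_{(m,n)}}`. -/
def Rpar (α β : ℝ) (m n : ℤ) : Set (ℝ × ℝ) :=
  {p | ∃ a b : ℝ, a ∈ Set.uIcc 0 (tcoord α β m n) ∧ b ∈ Set.uIcc 0 (scoord α β m n) ∧
    p = (a + b, a * α + b * β)}

/-- The interior of the parallelogram `R_{(m,n)}` contains no point of `ℤ²`. -/
def NoLatticeInterior (α β : ℝ) (m n : ℤ) : Prop :=
  ∀ p ∈ interior (Rpar α β m n), ¬ ∃ k l : ℤ, p = ((k : ℝ), (l : ℝ))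

/-- `(p,q)` (with `q ≥ 1` and `p − qα < 0`) is a *good lower approximation of the second kind*
of `α`: `|p − qα| < |p′ − q′α|` for every `(p′,q′) ≠ (p,q)` with `1 ≤ q′ ≤ q` and
`p′ − q′α < 0`. -/
def GoodLower (α : ℝ) (p q : ℤ) : Prop :=
  1 ≤ q ∧ (p : ℝ) - q * α < 0 ∧
    ∀ p' q' : ℤ, (p', q') ≠ (p, q) → 1 ≤ q' → q' ≤ q → (p' : ℝ) - q' * α < 0 →
      |(p : ℝ) - q * α| < |(p' : ℝ) - q' * α|

/-- `(p,q)` (with `q ≥ 1` and `p − qα > 0`) is a *good upper approximation of the second kind*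
of `α`. -/
def GoodUpper (α : ℝ) (p q : ℤ) : Prop :=
  1 ≤ q ∧ 0 < (p : ℝ) - q * α ∧
    ∀ p' q' : ℤ, (p', q') ≠ (p, q) → 1 ≤ q' → q' ≤ q → 0 < (p' : ℝ) - q' * α →
      |(p : ℝ) - q * α| < |(p' : ℝ) - q' * α|

lemma Rpar_eq_preimage (α β : ℝ) (h : β < α) (m n : ℤ) :
    Rpar α β m n = (fun p : ℝ × ℝ => ((p.2 - β*p.1)/(α-β), (α*p.1 - p.2)/(α-β))) ⁻¹'
      (Set.uIcc 0 (tcoord α β m n) ×ˢ Set.uIcc 0 (scoord α β m n)) := by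
  have hD : α - β ≠ 0 := by intro h'; nlinarith
  ext p; constructor
  · rintro ⟨a, b, ha, hb, rfl⟩
    simp only [Set.mem_preimage, Set.mem_prod]
    have h1 : ((a*α + b*β) - β*(a+b))/(α-β) = a := by field_simp; ring
    have h2 : (α*(a+b) - (a*α + b*β))/(α-β) = b := by field_simp; ring
    rw [h1, h2]
    exact ⟨ha, hb⟩
  · intro hp
    simp only [Set.mem_preimage, Set.mem_prod] at hp
    refine ⟨_, _, hp.1, hp.2, ?_⟩
    obtain ⟨x, y⟩ := p
    rw [Prod.mk.injEq]
    constructor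
    · field_simp; ring
    · field_simp; ring

lemma interior_Rpar (α β : ℝ) (h : β < α) (m n : ℤ) :
    interior (Rpar α β m n) = (fun p : ℝ × ℝ => ((p.2 - β*p.1)/(α-β), (α*p.1 - p.2)/(α-β))) ⁻¹'
      (interior (Set.uIcc 0 (tcoord α β m n)) ×ˢ interior (Set.uIcc 0 (scoord α β m n))) := by
  have hD : α - β ≠ 0 := by intro h'; nlinarith
  set F : ℝ × ℝ → ℝ × ℝ := fun p => ((p.2 - β*p.1)/(α-β), (α*p.1 - p.2)/(α-β)) with hF
  set G : ℝ × ℝ → ℝ × ℝ := fun q => (q.1 + q.2, q.1 * α + q.2 * β) with hG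
  have hFc : Continuous F := by fun_prop
  have hGc : Continuous G := by fun_prop
  have hGF : ∀ p, G (F p) = p := by
    rintro ⟨x, y⟩
    simp only [hF, hG]
    rw [Prod.mk.injEq]
    constructor
    · field_simp; ring
    · field_simp; ring
  have hFG : ∀ q, F (G q) = q := by
    rintro ⟨a, b⟩
    simp only [hF, hG]
    rw [Prod.mk.injEq]
    constructor
    · field_simp; ring
    · field_simp; ring
  rw [← interior_prod_eq]
  apply subset_antisymm
  · intro p hp
    have hopen : IsOpen (G ⁻¹' (interior (Rpar α β m n))) := isOpen_interior.preimage hGc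
    have hmem : F p ∈ G ⁻¹' (interior (Rpar α β m n)) := by
      simp only [Set.mem_preimage, hGF p]; exact hp
    have hsub : G ⁻¹' (interior (Rpar α β m n)) ⊆
        (Set.uIcc 0 (tcoord α β m n) ×ˢ Set.uIcc 0 (scoord α β m n)) := by
      intro q hq
      have : G q ∈ Rpar α β m n := interior_subset hq
      rw [Rpar_eq_preimage α β h m n] at this
      have h2 := Set.mem_preimage.mp this
      have h3 : F (G q) ∈ Set.uIcc 0 (tcoord α β m n) ×ˢ Set.uIcc 0 (scoord α β m n) := h2
      rwa [hFG q] at h3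
    exact interior_maximal hsub hopen hmem
  · apply interior_maximal
    · rw [Rpar_eq_preimage α β h m n]
      exact Set.preimage_mono interior_subset
    · exact isOpen_interior.preimage hFc

lemma div_pos_iff' {x c : ℝ} (h : 0 < c) : 0 < x / c ↔ 0 < x := by
  constructor
  · intro hx
    rcases div_pos_iff.mp hx with ⟨h1, _⟩ | ⟨_, h2⟩
    · exact h1
    · linarith
  · intro hx; positivity

lemma mem_int_lower (α β : ℝ) (h : β < α) (m n k l : ℤ)
    (hT : 0 < tcoord α β m n) (hS : 0 < scoord α β m n) :
    (((k:ℝ), (l:ℝ)) ∈ interior (Rpar α β m n)) ↔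
      (0 < (l:ℝ) - β*k ∧ (l:ℝ) - β*k < (n:ℝ) - β*m ∧
        0 < α*k - l ∧ α*k - l < α*m - n) := by
  have hD : (0:ℝ) < α - β := by linarith
  rw [interior_Rpar α β h m n]
  rw [Set.mem_preimage, Set.uIcc_of_le (le_of_lt hT), Set.uIcc_of_le (le_of_lt hS),
    interior_Icc, interior_Icc, Set.mem_prod, Set.mem_Ioo, Set.mem_Ioo]
  simp only []
  rw [div_pos_iff' hD, div_pos_iff' hD]
  unfold tcoord scoord
  rw [div_lt_div_iff_of_pos_right hD, div_lt_div_iff_of_pos_right hD]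
  tauto

lemma mem_int_upper (α β : ℝ) (h : β < α) (m n k l : ℤ)
    (hT : 0 < tcoord α β m n) (hS : scoord α β m n < 0) :
    (((k:ℝ), (l:ℝ)) ∈ interior (Rpar α β m n)) ↔
      (0 < (l:ℝ) - β*k ∧ (l:ℝ) - β*k < (n:ℝ) - β*m ∧
        α*m - n < α*k - l ∧ α*k - l < 0) := by
  have hD : (0:ℝ) < α - β := by linarith
  rw [interior_Rpar α β h m n]
  rw [Set.mem_preimage, Set.uIcc_of_le (le_of_lt hT), Set.uIcc_of_ge (le_of_lt hS),
    interior_Icc, interior_Icc, Set.mem_prod, Set.mem_Ioo, Set.mem_Ioo]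
  simp only []
  rw [div_pos_iff' hD]
  unfold tcoord scoord
  rw [div_lt_div_iff_of_pos_right hD, div_lt_div_iff_of_pos_right hD]
  have e1 : ((α*(k:ℝ) - l)/(α-β) < 0) ↔ (α*(k:ℝ) - l < 0) := by
    constructor
    · intro hx
      rcases div_neg_iff.mp hx with ⟨_, h2⟩ | ⟨h1, _⟩
      · linarith
      · exact h1
    · intro hx
      apply div_neg_of_neg_of_pos hx hD
  rw [e1]
  tauto

lemma noLat_iff (α β : ℝ) (m n : ℤ) :
    NoLatticeInterior α β m n ↔ ∀ k l : ℤ, ((k:ℝ), (l:ℝ)) ∉ interior (Rpar α β m n) := by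
  constructor
  · intro H k l hmem
    exact H _ hmem ⟨k, l, rfl⟩
  · rintro H p hp ⟨k, l, rfl⟩
    exact H k l hp


lemma keyLemma (α D S T : ℝ) (hD : 0 < D)
    (hirr : ∀ k l : ℤ, k ≠ 0 → α * k ≠ l)
    (hS : 0 < S) (hDS : D * S < 1) (hT : 4/D + 2 ≤ T)
    (k' l' : ℤ) (hk1 : 1 ≤ k') (hk2 : (k':ℝ) < S)
    (hv0 : 0 < α*k' - l') (hv1 : α*k' - l' < D*S) :
    ∃ k l : ℤ, S ≤ (k:ℝ) ∧ (k:ℝ) ≤ T ∧ 0 < α*k - l ∧ α*k - l < D*S := by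
  have hDinv : (0:ℝ) < 1/D := by positivity
  have hSD : S < 1/D := by rw [lt_div_iff₀ hD]; nlinarith
  have hk0 : (0:ℝ) < (k':ℝ) := by exact_mod_cast lt_of_lt_of_le Int.zero_lt_one hk1
  have hdd : (2:ℝ)/D = 2*(1/D) := by ring
  have hdd4 : (4:ℝ)/D = 4*(1/D) := by ring
  have h2DT : 2/D ≤ T := by rw [hdd]; rw [hdd4] at hT; linarith
  set v : ℝ := α*k' - l' with hv
  have hDSpos : 0 < D*S := by positivity
  by_cases hbr : v * (S + k') < (D*S) * k'
  · -- multiples of (k', l')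
    set j : ℤ := ⌈S / (k':ℝ)⌉ with hj
    have hj1 : 1 ≤ j := by
      have : (0:ℤ) < j := Int.ceil_pos.mpr (by positivity)
      omega
    have hj1R : (1:ℝ) ≤ (j:ℝ) := by exact_mod_cast hj1
    have hjle : S / k' ≤ (j:ℝ) := Int.le_ceil _
    have hjlt : (j:ℝ) < S / k' + 1 := Int.ceil_lt_add_one _
    have hSk : S = (S/k')*k' := by field_simp
    have hjkS : S ≤ (j:ℝ)*k' := by nlinarith
    have hjk2 : (j:ℝ) * k' < S + k' := by nlinarith
    refine ⟨j * k', j * l', ?_, ?_, ?_, ?_⟩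
    · push_cast; nlinarith
    · push_cast; rw [hdd] at h2DT; nlinarith
    · push_cast
      have heq : α*((j:ℝ)*k') - j*l' = j * v := by rw [hv]; ring
      rw [heq]; nlinarith
    · push_cast
      have heq : α*((j:ℝ)*k') - j*l' = j * v := by rw [hv]; ring
      rw [heq]
      have h1 : (j:ℝ) * v < (S/k' + 1) * v := by nlinarith
      have h2 : (S/k' + 1) * v = (v * (S + k'))/k' := by field_simp
      have h3 : (v * (S + k'))/k' < (D*S*k')/k' := (div_lt_div_iff_of_pos_right hk0).mpr hbr
      have h4 : (D*S*k')/k' = D*S := by field_simp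
      linarith
  · push_neg at hbr
    by_contra hcon
    push_neg at hcon
    have Hf : ∀ k : ℤ, S ≤ (k:ℝ) → (k:ℝ) ≤ T → D*S ≤ Int.fract (α*k) := by
      intro k h1 h2
      have hkne : k ≠ 0 := by
        rintro rfl
        simp only [Int.cast_zero] at h1
        linarith
      have hfr0 : 0 < Int.fract (α*k) := by
        rcases lt_or_eq_of_le (Int.fract_nonneg (α*(k:ℝ))) with h | h
        · exact h
        · exfalso
          apply hirr k ⌊α*(k:ℝ)⌋ hkne
          have h5 := Int.self_sub_floor (α*(k:ℝ))
          rw [← h] at h5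
          linarith
      have h6 := hcon k ⌊α*(k:ℝ)⌋ h1 h2
      rw [Int.self_sub_floor (α*(k:ℝ))] at h6
      exact h6 hfr0
    have hceilS : S ≤ (⌈S⌉:ℝ) := Int.le_ceil S
    have hceilS2 : (⌈S⌉:ℝ) < S + 1 := Int.ceil_lt_add_one S
    have hk'R : (1:ℝ) ≤ (k':ℝ) := by exact_mod_cast hk1
    set kf : ℕ → ℤ := fun j => ⌈S⌉ + (j:ℤ)*k' with hkf
    have hkfc : ∀ j : ℕ, ((kf j : ℤ):ℝ) = (⌈S⌉:ℝ) + (j:ℝ)*(k':ℝ) := by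
      intro j; rw [hkf]; push_cast; ring
    have hkfs : ∀ j : ℕ, kf (j+1) = kf j + k' := by
      intro j; rw [hkf]; push_cast; ring
    have claim : ∀ j : ℕ, ((kf j : ℤ):ℝ) ≤ T →
        D*S + (j:ℝ)*v ≤ Int.fract (α*((kf j : ℤ):ℝ)) := by
      intro j
      induction j with
      | zero =>
        intro hle
        rw [hkfc 0] at hle ⊢
        simp only [Nat.cast_zero, zero_mul, add_zero] at hle ⊢
        have := Hf ⌈S⌉ hceilS hle
        linarith
      | succ i ih =>
        intro hle
        rw [hkfc (i+1)] at hle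
        push_cast at hle
        have hprev : ((kf i : ℤ):ℝ) ≤ T := by
          rw [hkfc i]; nlinarith
        have ihh := ih hprev
        set x := α * ((kf i : ℤ):ℝ) with hx
        have hfx0 : 0 ≤ Int.fract x := Int.fract_nonneg x
        have hfx1 : Int.fract x < 1 := Int.fract_lt_one x
        have hyx : α*((kf (i+1) : ℤ):ℝ) = (x + v) + l' := by
          rw [hkfs i, hx, hv]; push_cast; ring
        have hfr : Int.fract (α*((kf (i+1) : ℤ):ℝ)) = Int.fract (x + v) := by
          rw [hyx, Int.fract_add_intCast]
        have hxval : x - (⌊x⌋:ℝ) = Int.fract x := Int.self_sub_floor x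
        by_cases hwrap : Int.fract x + v < 1
        · have hfrv : Int.fract (x + v) = Int.fract x + v := by
            have hrw : x + v = (Int.fract x + v) + (⌊x⌋:ℝ) := by linarith
            rw [hrw, Int.fract_add_intCast, Int.fract_eq_self.mpr ⟨by nlinarith, hwrap⟩]
          rw [hfr, hfrv]
          push_cast
          linarith
        · exfalso
          push_neg at hwrap
          have hmem1 : S ≤ ((kf (i+1) : ℤ):ℝ) := by
            rw [hkfc (i+1)]
            push_cast
            nlinarith
          have hle' : ((kf (i+1) : ℤ):ℝ) ≤ T := by
            rw [hkfc (i+1)]; push_cast; linarith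
          have hf2 := Hf _ hmem1 hle'
          rw [hfr] at hf2
          have hfrv : Int.fract (x + v) = Int.fract x + v - 1 := by
            have hrw : x + v = (Int.fract x + v - 1) + ((⌊x⌋ + 1 : ℤ):ℝ) := by push_cast; linarith
            rw [hrw, Int.fract_add_intCast, Int.fract_eq_self.mpr ⟨by linarith, by nlinarith⟩]
          rw [hfrv] at hf2
          nlinarith
    set J : ℕ := (⌈(1 - D*S)/v⌉).toNat with hJ
    have hcl0 : (0:ℤ) ≤ ⌈(1 - D*S)/v⌉ := Int.ceil_nonneg (div_nonneg (by linarith) (le_of_lt hv0))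
    have hJcast : ((J:ℤ):ℝ) = ((⌈(1 - D*S)/v⌉ : ℤ):ℝ) := by
      rw [hJ]; norm_cast; omega
    have hJR : ((J:ℤ):ℝ) = (J:ℝ) := by push_cast; ring
    have hJ1 : (1 - D*S)/v ≤ (J:ℝ) := by
      have h7 := Int.le_ceil ((1 - D*S)/v)
      rw [← hJR, hJcast]; exact h7
    have hJ2 : (J:ℝ) ≤ (1 - D*S)/v + 1 := by
      have h7 := Int.ceil_lt_add_one ((1 - D*S)/v)
      rw [← hJR, hJcast]; linarith
    have hJv : 1 - D*S ≤ (J:ℝ)*v := by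
      have h8 := mul_le_mul_of_nonneg_right hJ1 (le_of_lt hv0)
      rw [div_mul_cancel₀] at h8
      · linarith
      · linarith
    have hJvpos : 0 ≤ (J:ℝ) := Nat.cast_nonneg J
    have hbound : ((kf J : ℤ):ℝ) ≤ T := by
      rw [hkfc J]
      have c1 : ((1 - D*S)/v)*k' ≤ k'/v := by
        rw [div_mul_eq_mul_div]
        apply div_le_div_of_nonneg_right ?_ (le_of_lt hv0) |>.trans_eq rfl
        nlinarith
      have c2 : (k':ℝ)/v ≤ (S + k')/(D*S) := by
        rw [div_le_div_iff₀ hv0 hDSpos]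
        nlinarith
      have c3 : (S + (k':ℝ))/(D*S) ≤ (2*S)/(D*S) := by
        apply div_le_div_of_nonneg_right ?_ (le_of_lt hDSpos) |>.trans_eq rfl
        linarith
      have c4 : (2*S)/(D*S) = 2/D := by
        rw [div_eq_div_iff (ne_of_gt hDSpos) (ne_of_gt hD)]
        ring
      have c5 : (J:ℝ)*k' ≤ ((1 - D*S)/v + 1)*k' := by nlinarith
      have c6 : ((1 - D*S)/v + 1)*k' = ((1 - D*S)/v)*k' + k' := by ring
      rw [hdd] at h2DT
      rw [hdd4] at hT
      nlinarith
    have hcJ := claim J hbound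
    have hlt1 := Int.fract_lt_one (α*((kf J : ℤ):ℝ))
    nlinarith


lemma lowCon (α β : ℝ) (hβα : β < α)
    (hirr : ∀ k l : ℤ, k ≠ 0 → α * k ≠ l)
    (m n p' q' : ℤ) (hm : 1 ≤ m)
    (hq1 : 1 ≤ q') (hq2 : q' ≤ m)
    (hv0 : 0 < α*q' - p') (hv1 : α*q' - p' < α*m - n)
    (hT : 10 + 10/(α-β) + 10/(α-β)^2 ≤ ((n:ℝ) - β*m)/(α-β)) :
    ∃ k l : ℤ, 0 < (l:ℝ) - β*k ∧ (l:ℝ) - β*k < (n:ℝ) - β*m ∧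
      0 < α*k - l ∧ α*k - l < α*m - n := by
  have hD : (0:ℝ) < α - β := by linarith
  set D := α - β with hDdef
  set S : ℝ := (α*m - n)/D with hSdef
  set T : ℝ := ((n:ℝ) - β*m)/D with hTdef
  have hDne : D ≠ 0 := ne_of_gt hD
  have hDS : D*S = α*m - n := by rw [hSdef]; field_simp
  have hDT : D*T = (n:ℝ) - β*m := by rw [hTdef]; field_simp
  have hS : 0 < S := by
    rw [hSdef]; apply div_pos ?_ hD; linarith
  have hmTS : (m:ℝ) = T + S := by
    rw [hTdef, hSdef]
    field_simp
    ring
  have hDi : (0:ℝ) < 1/D := by positivity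
  have hDi2 : (0:ℝ) < 1/D^2 := by positivity
  have h10 : (10:ℝ)/D = 10*(1/D) := by ring
  have h10b : (10:ℝ)/D^2 = 10*(1/D^2) := by ring
  have h4 : (4:ℝ)/D = 4*(1/D) := by ring
  have hT10 : 10 + 10*(1/D) + 10*(1/D^2) ≤ T := by rw [← h10, ← h10b]; exact hT
  have hTpos : 4/D + 2 ≤ T := by rw [h4]; nlinarith
  have hT0 : 0 < T := by nlinarith
  have hDT1 : 1 < D*T := by
    have : D*(10 + 10*(1/D) + 10*(1/D^2)) ≤ D*T := by nlinarith
    have e : D*(10 + 10*(1/D) + 10*(1/D^2)) = 10*D + 10 + 10*(1/D) := by field_simp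
    nlinarith
  have P1 : ∀ k l : ℤ, S ≤ (k:ℝ) → (k:ℝ) ≤ T → 0 < α*k - l → α*k - l < D*S →
      (0 < (l:ℝ) - β*k ∧ (l:ℝ) - β*k < (n:ℝ) - β*m ∧ 0 < α*k - l ∧ α*k - l < α*m - n) := by
    intro k l h1 h2 h3 h4
    have e : (l:ℝ) - β*k = D*(k:ℝ) - (α*k - l) := by rw [hDdef]; ring
    refine ⟨?_, ?_, h3, by rw [← hDS]; exact h4⟩
    · rw [e]
      have : D*S ≤ D*(k:ℝ) := by nlinarith
      linarith
    · rw [e, ← hDT]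
      have : D*(k:ℝ) ≤ D*T := by nlinarith
      linarith
  rcases lt_trichotomy (α*m - (n:ℝ)) 1 with hcase | hcase | hcase
  · -- D*S < 1
    have hDS1 : D*S < 1 := by rw [hDS]; exact hcase
    have hq2' : q' ≤ m - 1 := by
      by_contra hq
      push_neg at hq
      have hqm : q' = m := by omega
      subst hqm
      have hnp : (n:ℝ) < p' := by linarith
      have hnp' : (n:ℝ) + 1 ≤ p' := by exact_mod_cast hnp
      linarith
    by_cases hpos1 : (q':ℝ) < S
    · obtain ⟨k, l, h1, h2, h3, h4⟩ :=
        keyLemma α D S T hD hirr hS hDS1 hTpos q' p' hq1 hpos1 hv0 (by rw [hDS]; exact hv1)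
      exact ⟨k, l, (P1 k l h1 h2 h3 h4).1, (P1 k l h1 h2 h3 h4).2.1,
        (P1 k l h1 h2 h3 h4).2.2.1, (P1 k l h1 h2 h3 h4).2.2.2⟩
    · push_neg at hpos1
      by_cases hpos2 : (q':ℝ) ≤ T
      · exact ⟨q', p', P1 q' p' hpos1 hpos2 hv0 (by rw [hDS]; exact hv1)⟩
      · push_neg at hpos2
        set k'' : ℤ := m - q' with hk''
        set l'' : ℤ := n - p' with hl''
        have hk''1 : 1 ≤ k'' := by omega
        have hk''S : ((k'':ℤ):ℝ) < S := by
          rw [hk'']; push_cast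
          rw [hmTS] at *
          linarith
        have hv''0 : 0 < α*k'' - l'' := by
          rw [hk'', hl'']; push_cast; nlinarith
        have hv''1 : α*k'' - l'' < D*S := by
          rw [hk'', hl'', hDS]; push_cast; nlinarith
        obtain ⟨k, l, h1, h2, h3, h4⟩ :=
          keyLemma α D S T hD hirr hS hDS1 hTpos k'' l'' hk''1 hk''S hv''0 hv''1
        exact ⟨k, l, P1 k l h1 h2 h3 h4⟩
  · exfalso
    apply hirr m (n+1) (by omega)
    push_cast
    linarith
  · -- 1 < D*S
    set khat : ℤ := ⌊1/D⌋ + 1 with hkhat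
    have hkh1 : 1 ≤ khat := by
      have : (0:ℤ) ≤ ⌊1/D⌋ := Int.floor_nonneg.mpr (le_of_lt hDi)
      omega
    have hkhlt : 1/D < (khat:ℝ) := by rw [hkhat]; push_cast; exact Int.lt_floor_add_one _
    have hkhle : (khat:ℝ) ≤ 1/D + 1 := by
      rw [hkhat]; push_cast
      have := Int.floor_le (1/D)
      linarith
    have hkhD : 1 < D*khat := by
      rw [show (1:ℝ) = D*(1/D) by field_simp]
      apply mul_lt_mul_of_pos_left hkhlt hD
    have hkhT : (khat:ℝ) ≤ T := by nlinarith
    by_cases hc : (khat:ℝ) ≤ S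
    · refine ⟨khat, ⌊β*khat⌋ + 1, ?_, ?_, ?_, ?_⟩
      · push_cast
        have := Int.lt_floor_add_one (β*(khat:ℝ))
        linarith
      · push_cast
        have := Int.floor_le (β*(khat:ℝ))
        rw [← hDT]
        linarith
      · push_cast
        have := Int.floor_le (β*(khat:ℝ))
        have e : α*(khat:ℝ) = D*khat + β*khat := by rw [hDdef]; ring
        nlinarith
      · push_cast
        have := Int.lt_floor_add_one (β*(khat:ℝ))
        have e : α*(khat:ℝ) = D*khat + β*khat := by rw [hDdef]; ring
        have hDkS : D*(khat:ℝ) ≤ D*S := by nlinarith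
        rw [← hDS]
        nlinarith
    · push_neg at hc
      have hceil : (⌈S⌉:ℝ) ≤ (khat:ℝ) := by
        exact_mod_cast Int.ceil_le.mpr (le_of_lt hc)
      have hc0 : 0 < ⌈S⌉ := Int.ceil_pos.mpr hS
      have hfr0 : 0 < α*(⌈S⌉:ℝ) - ⌊α*(⌈S⌉:ℝ)⌋ := by
        rcases lt_or_eq_of_le (Int.floor_le (α*(⌈S⌉:ℝ))) with h | h
        · linarith
        · exact absurd h.symm (hirr ⌈S⌉ ⌊α*(⌈S⌉:ℝ)⌋ (by omega))
      have hfr1 : α*(⌈S⌉:ℝ) - ⌊α*(⌈S⌉:ℝ)⌋ < 1 := by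
        have := Int.lt_floor_add_one (α*(⌈S⌉:ℝ))
        linarith
      exact ⟨⌈S⌉, ⌊α*(⌈S⌉:ℝ)⌋, P1 _ _ (Int.le_ceil S) (by linarith) hfr0 (by rw [hDS]; linarith)⟩


lemma subU (α D : ℝ) (hD : 0 < D)
    (hirr : ∀ k l : ℤ, k ≠ 0 → α * k ≠ l)
    (m n : ℤ) (hm : 1/D + 1 < (m:ℝ))
    (hDS0 : 0 < (n:ℝ) - α*m) (hDS1 : (n:ℝ) - α*m < 1)
    (good : ∀ p' q' : ℤ, (p', q') ≠ (n, m) → 1 ≤ q' → q' ≤ m → 0 < (p':ℝ) - α*q' →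
      (n:ℝ) - α*m < (p':ℝ) - α*q')
    (p q : ℤ) (hq : 1 ≤ q) (hw0 : D*q < α*q - p) (hw1 : α*q - p < (n:ℝ) - α*m) : False := by
  set w : ℝ := α*q - p with hw
  have hq0 : (0:ℝ) < q := by exact_mod_cast hq
  have hwpos : 0 < w := lt_trans (by positivity) hw0
  have hw1' : w < 1 := lt_trans hw1 hDS1
  set j : ℤ := ⌊1/w⌋ with hj
  have hj1 : 1 ≤ j := by
    apply Int.le_floor.mpr
    rw [le_div_iff₀ hwpos]
    push_cast
    linarith
  have hj1R : (1:ℝ) ≤ (j:ℝ) := by exact_mod_cast hj1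
  have hjle : (j:ℝ) ≤ 1/w := Int.floor_le _
  have hjlt : 1/w - 1 < (j:ℝ) := Int.sub_one_lt_floor _
  have hwinv : (1/w)*w = 1 := by field_simp
  have hjw_le : (j:ℝ)*w ≤ 1 := by nlinarith
  have hjw_ne : (j:ℝ)*w ≠ 1 := by
    intro h
    apply hirr (j*q) (j*p + 1) (by positivity)
    push_cast
    rw [hw] at h
    nlinarith
  have hjw1 : (j:ℝ)*w < 1 := lt_of_le_of_ne hjw_le hjw_ne
  have hjw2 : 1 - ((n:ℝ) - α*m) < (j:ℝ)*w := by nlinarith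
  have hjq : (j:ℝ)*q < 1/D := by
    have h1 : (j:ℝ)*q ≤ (1/w)*q := by nlinarith
    have h2 : (1/w)*q < 1/D := by
      rw [div_mul_eq_mul_div, div_lt_div_iff₀ hwpos hD]
      nlinarith
    linarith
  have hjqm : j*q ≤ m := by
    have h3 : ((j*q : ℤ):ℝ) < (m:ℝ) := by push_cast; linarith
    exact_mod_cast le_of_lt (by exact_mod_cast h3 : (j*q:ℤ) < m)
  have hjq1 : 1 ≤ j*q := by nlinarith
  have hne : (j*p + 1, j*q) ≠ (n, m) := by
    intro h
    have h2 : j*q = m := congrArg Prod.snd h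
    have h3 : ((j*q:ℤ):ℝ) = (m:ℝ) := by rw [h2]
    push_cast at h3
    linarith
  have hval : 0 < ((j*p + 1 : ℤ):ℝ) - α*((j*q:ℤ):ℝ) := by
    push_cast
    rw [hw] at hjw1
    nlinarith
  have hfin := good (j*p+1) (j*q) hne hjq1 hjqm hval
  push_cast at hfin
  rw [hw] at hjw2
  nlinarith


lemma upHard (α β : ℝ) (hβα : β < α)
    (hirr : ∀ k l : ℤ, k ≠ 0 → α * k ≠ l)
    (m n : ℤ) (hm : 1 ≤ m)
    (hDS0 : 0 < (n:ℝ) - α*m)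
    (good : ∀ p' q' : ℤ, (p', q') ≠ (n, m) → 1 ≤ q' → q' ≤ m → 0 < (p':ℝ) - α*q' →
      (n:ℝ) - α*m < (p':ℝ) - α*q')
    (hT : 10 + 10/(α-β) + 10/(α-β)^2 ≤ ((n:ℝ) - β*m)/(α-β)) :
    ∀ k l : ℤ, ¬(0 < (l:ℝ) - β*k ∧ (l:ℝ) - β*k < (n:ℝ) - β*m ∧
      α*m - n < α*k - l ∧ α*k - l < 0) := by
  have hD : (0:ℝ) < α - β := by linarith
  set D := α - β with hDdef
  have hDne : D ≠ 0 := ne_of_gt hD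
  set T : ℝ := ((n:ℝ) - β*m)/D with hTdef
  have hDT : D*T = (n:ℝ) - β*m := by rw [hTdef]; field_simp
  have hDi : (0:ℝ) < 1/D := by positivity
  have hDi2 : (0:ℝ) < 1/D^2 := by positivity
  have h10 : (10:ℝ)/D = 10*(1/D) := by ring
  have h10b : (10:ℝ)/D^2 = 10*(1/D^2) := by ring
  have hT10 : 10 + 10*(1/D) + 10*(1/D^2) ≤ T := by rw [← h10, ← h10b]; exact hT
  have hDD : D*(1/D) = 1 := by field_simp
  -- ceiling facts
  have hca1 : α < (⌈α⌉:ℝ) := by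
    rcases lt_or_eq_of_le (Int.le_ceil α) with h | h
    · exact h
    · exact absurd (by rw [← h]; push_cast; ring) (hirr 1 ⌈α⌉ one_ne_zero)
  have hca2 : (⌈α⌉:ℝ) < α + 1 := Int.ceil_lt_add_one α
  -- m ≥ 2
  have hm2 : 2 ≤ m := by
    by_contra hm1
    have hm1' : m = 1 := by omega
    subst hm1'
    by_cases hn : n = ⌈α⌉
    · subst hn
      -- T = 1 + S̃, S̃ < 1/D
      have hST : (⌈α⌉:ℝ) - β*1 = D*1 + ((⌈α⌉:ℝ) - α*1) := by rw [hDdef]; ring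
      have hS1 : (⌈α⌉:ℝ) - α*1 < 1 := by push_cast at hca2 ⊢; linarith
      have : D*T < D*1 + 1 := by rw [hDT]; push_cast at hST ⊢; linarith
      have h2 : D*(10 + 10*(1/D) + 10*(1/D^2)) ≤ D*T := by nlinarith
      have h3 : D*(10 + 10*(1/D) + 10*(1/D^2)) = 10*D + 10 + 10*(1/D) := by field_simp
      nlinarith
    · have hne : ((⌈α⌉:ℤ), (1:ℤ)) ≠ (n, 1) := by
        intro h
        exact hn (congrArg Prod.fst h).symm
      have h5 := good ⌈α⌉ 1 hne le_rfl le_rfl (by push_cast; linarith)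
      push_cast at h5 hDS0
      have hni : n < ⌈α⌉ := by exact_mod_cast (by linarith : (n:ℝ) < (⌈α⌉:ℝ))
      have hni2 : ((n:ℝ)) ≤ (⌈α⌉:ℝ) - 1 := by exact_mod_cast (by omega : n ≤ ⌈α⌉ - 1)
      linarith
  -- D*S̃ < 1
  have hne1 : ((⌈α⌉:ℤ), (1:ℤ)) ≠ (n, m) := by
    intro h
    have := congrArg Prod.snd h
    simp at this
    omega
  have hDS1 : (n:ℝ) - α*m < 1 := by
    have := good ⌈α⌉ 1 hne1 le_rfl (by omega) (by push_cast; linarith)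
    push_cast at this
    linarith
  -- m large
  have hmT : (m:ℝ) = T - ((n:ℝ) - α*m)/D := by
    rw [hTdef]
    field_simp
    ring
  have hSD : ((n:ℝ) - α*m)/D < 1/D := (div_lt_div_iff_of_pos_right hD).mpr hDS1
  have hmbig : 1/D + 1 < (m:ℝ) := by rw [hmT]; nlinarith
  -- main case analysis
  rintro k l ⟨h1, h2, h3, h4⟩
  set v : ℝ := (l:ℝ) - α*k with hv
  have hv0 : 0 < v := by rw [hv]; linarith
  have hv1 : v < (n:ℝ) - α*m := by rw [hv]; linarith
  by_cases hk1 : 1 ≤ k ∧ k ≤ m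
  · by_cases hlk : (l, k) = (n, m)
    · have e1 : l = n := congrArg Prod.fst hlk
      have e2 : k = m := congrArg Prod.snd hlk
      subst e1; subst e2
      rw [hv] at hv1
      linarith
    · have := good l k hlk hk1.1 hk1.2 (by rw [hv] at hv0; linarith)
      rw [hv] at hv1
      linarith
  · by_cases hk0 : k ≤ 0
    · by_cases hkz : k = 0
      · subst hkz
        have hl1 : 1 ≤ l := by
          have : (0:ℝ) < l := by rw [hv] at hv0; push_cast at hv0; linarith
          exact_mod_cast this
        have : (1:ℝ) ≤ l := by exact_mod_cast hl1
        rw [hv] at hv1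
        push_cast at hv1
        linarith
      · -- k ≤ -1 : lower pair (-l, -k)
        have hkneg : k ≤ -1 := by omega
        apply subU α D hD hirr m n hmbig hDS0 hDS1 good (-l) (-k) (by omega) ?_ ?_
        · push_cast
          have : (k:ℝ) ≤ -1 := by exact_mod_cast hkneg
          have e : (l:ℝ) - β*k = v + D*k := by rw [hv, hDdef]; ring
          nlinarith
        · push_cast
          rw [hv] at hv1
          linarith
    · -- k ≥ m + 1
      have hkm : m + 1 ≤ k := by omega
      apply subU α D hD hirr m n hmbig hDS0 hDS1 good (l - n) (k - m) (by omega) ?_ ?_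
      · push_cast
        have e : (l:ℝ) - β*k = v + D*k := by rw [hv, hDdef]; ring
        have e2 : (n:ℝ) - β*m = ((n:ℝ) - α*m) + D*m := by rw [hDdef]; ring
        nlinarith
      · push_cast
        rw [hv] at hv0
        nlinarith


lemma irrat (A : Matrix (Fin 2) (Fin 2) ℤ) (lam α : ℝ)
    (hlam0 : 0 < lam) (hlam1 : lam < 1)
    (hAα0 : (A 0 0 : ℝ) + A 0 1 * α = lam)
    (hAα1 : (A 1 0 : ℝ) + A 1 1 * α = lam * α) :
    ∀ k l : ℤ, k ≠ 0 → α * k ≠ l := by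
  intro k l hk heq
  set g : ℤ × ℤ → ℤ × ℤ :=
    fun v => (A 0 0 * v.1 + A 0 1 * v.2, A 1 0 * v.1 + A 1 1 * v.2) with hg
  set seq : ℕ → ℤ × ℤ := fun N => g^[N] (k, l) with hseq
  have hstep : ∀ N, seq (N+1) = g (seq N) := by
    intro N
    rw [hseq]
    exact Function.iterate_succ_apply' g N (k, l)
  have hl : (l:ℝ) = α*k := heq.symm
  have hinv : ∀ N, ((seq N).1 : ℝ) = lam^N * k ∧ ((seq N).2 : ℝ) = lam^N * l := by
    intro N
    induction N with
    | zero => simp [hseq]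
    | succ i ih =>
      obtain ⟨ih1, ih2⟩ := ih
      rw [hstep i]
      constructor
      · show ((A 0 0 * (seq i).1 + A 0 1 * (seq i).2 : ℤ):ℝ) = lam^(i+1)*k
        push_cast
        rw [ih1, ih2, hl]
        calc (A 0 0 : ℝ) * (lam^i*k) + A 0 1 * (lam^i*(α*k))
            = lam^i * k * ((A 0 0 : ℝ) + A 0 1 * α) := by ring
          _ = lam^i * k * lam := by rw [hAα0]
          _ = lam^(i+1) * k := by ring
      · show ((A 1 0 * (seq i).1 + A 1 1 * (seq i).2 : ℤ):ℝ) = lam^(i+1)*l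
        push_cast
        rw [ih1, ih2, hl]
        calc (A 1 0 : ℝ) * (lam^i*k) + A 1 1 * (lam^i*(α*k))
            = lam^i * k * ((A 1 0 : ℝ) + A 1 1 * α) := by ring
          _ = lam^i * k * (lam * α) := by rw [hAα1]
          _ = lam^(i+1) * (α*k) := by ring
  have hkR : (0:ℝ) < |(k:ℝ)| := by
    have : (k:ℝ) ≠ 0 := by exact_mod_cast hk
    exact abs_pos.mpr this
  have hbig : ∀ N, (1:ℝ) ≤ lam^N * |(k:ℝ)| := by
    intro N
    have h1 : (seq N).1 ≠ 0 := by
      intro h0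
      have h2 := (hinv N).1
      rw [h0] at h2
      simp only [Int.cast_zero] at h2
      have hlamN : (0:ℝ) < lam^N := pow_pos hlam0 N
      have : (k:ℝ) = 0 := by
        rcases mul_eq_zero.mp h2.symm with h | h
        · linarith
        · exact h
      exact hk (by exact_mod_cast this)
    have h2 : 1 ≤ |(seq N).1| := Int.one_le_abs h1
    have h3 : (1:ℝ) ≤ |((seq N).1 : ℝ)| := by exact_mod_cast h2
    rw [(hinv N).1, abs_mul, abs_of_nonneg (le_of_lt (pow_pos hlam0 N))] at h3
    exact h3
  obtain ⟨N, hN⟩ := exists_pow_lt_of_lt_one (show (0:ℝ) < 1/|(k:ℝ)| by positivity) hlam1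
  have := hbig N
  rw [lt_div_iff₀ hkR] at hN
  linarith


/-- Fix `A ∈ SL(2,ℤ)` with eigenvalues `0 < λ < 1 < μ` and eigenvectors
`(1,α)`, `(1,β)` with `α > β`, `α > 0`. There exists `t₀ > 0` such that for every
`(m,n) ∈ ℤ²` with `m ≥ 1`, `n ≥ 0` and `t_{(m,n)} ≥ t₀`: the interior of `R_{(m,n)}`
contains no point of `ℤ²` if and only if `(n,m)` is a good lower or a good upper
approximation of the second kind of `α`. -/
theorem stmt4 (A : Matrix (Fin 2) (Fin 2) ℤ) (hdet : A.det = 1)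
    (lam mu α β : ℝ)
    (hlam0 : 0 < lam) (hlam1 : lam < 1) (hmu : 1 < mu)
    (hAα0 : (A 0 0 : ℝ) + A 0 1 * α = lam)
    (hAα1 : (A 1 0 : ℝ) + A 1 1 * α = lam * α)
    (hAβ0 : (A 0 0 : ℝ) + A 0 1 * β = mu)
    (hAβ1 : (A 1 0 : ℝ) + A 1 1 * β = mu * β)
    (hβα : β < α) (hα : 0 < α) :
    ∃ t₀ > (0 : ℝ), ∀ m n : ℤ, 1 ≤ m → 0 ≤ n → t₀ ≤ tcoord α β m n →
      (NoLatticeInterior α β m n ↔ (GoodLower α n m ∨ GoodUpper α n m)) := by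
  have hD : (0:ℝ) < α - β := by linarith
  have hirr : ∀ k l : ℤ, k ≠ 0 → α * k ≠ l := irrat A lam α hlam0 hlam1 hAα0 hAα1
  refine ⟨10 + 10/(α-β) + 10/(α-β)^2, by positivity, ?_⟩
  intro m n hm hn hT
  have hmne : m ≠ 0 := by omega
  have hT0 : 0 < tcoord α β m n := by
    have : (0:ℝ) < 10 + 10/(α-β) + 10/(α-β)^2 := by positivity
    linarith
  have hTnum : 10 + 10/(α-β) + 10/(α-β)^2 ≤ ((n:ℝ) - β*m)/(α-β) := hT
  have hSnum : (α-β) * scoord α β m n = α*m - n := by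
    unfold scoord; field_simp
  have hSne : scoord α β m n ≠ 0 := by
    intro h0
    apply hirr m n hmne
    rw [h0, mul_zero] at hSnum
    linarith
  rcases lt_or_gt_of_ne hSne with hSneg | hSpos
  · -- upper case : n > αm
    have hDS0 : 0 < (n:ℝ) - α*m := by nlinarith
    constructor
    · -- NoLatticeInterior → Good
      intro hNoLat
      refine Or.inr ⟨hm, by linarith [hDS0] , ?_⟩
      intro p' q' hne h1 h2 hneg
      by_contra habs
      push_neg at habs
      have hv0 : 0 < (p':ℝ) - α*q' := by linarith [hneg]
      have habs' : (p':ℝ) - α*q' ≤ (n:ℝ) - α*m := by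
        rw [abs_of_pos (by linarith : (0:ℝ) < (n:ℝ) - m*α),
          abs_of_pos (by linarith : (0:ℝ) < (p':ℝ) - q'*α)] at habs
        linarith
      have hv1 : (p':ℝ) - α*q' < (n:ℝ) - α*m := by
        rcases lt_or_eq_of_le habs' with h | h
        · exact h
        · exfalso
          by_cases hqm : q' = m
          · subst hqm
            have : (p':ℝ) = n := by linarith
            have : p' = n := by exact_mod_cast this
            exact hne (by rw [this])
          · exact hirr (q' - m) (p' - n) (by omega) (by push_cast; linarith)
      have hq'0 : (0:ℝ) < (q':ℝ) := by exact_mod_cast h1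
      have hq'm : (q':ℝ) ≤ (m:ℝ) := by exact_mod_cast h2
      have c1 : 0 < (p':ℝ) - β*q' := by nlinarith
      have c2 : (p':ℝ) - β*q' < (n:ℝ) - β*m := by nlinarith
      have c3 : α*(m:ℝ) - n < α*q' - p' := by linarith
      have c4 : α*(q':ℝ) - p' < 0 := by linarith
      exact absurd ((mem_int_upper α β hβα m n q' p' hT0 hSneg).mpr ⟨c1, c2, c3, c4⟩)
        ((noLat_iff α β m n).mp hNoLat q' p')
    · -- Good → NoLatticeInterior
      rintro (⟨_, hsgn, _⟩ | ⟨_, hsgn, hclause⟩)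
      · exfalso; nlinarith
      · have good : ∀ p' q' : ℤ, (p', q') ≠ (n, m) → 1 ≤ q' → q' ≤ m →
            0 < (p':ℝ) - α*q' → (n:ℝ) - α*m < (p':ℝ) - α*q' := by
          intro p' q' hne h1 h2 hpos
          have := hclause p' q' hne h1 h2 (by linarith)
          rw [abs_of_pos (by linarith : (0:ℝ) < (n:ℝ) - m*α),
            abs_of_pos (by linarith : (0:ℝ) < (p':ℝ) - q'*α)] at this
          linarith
        have hmain := upHard α β hβα hirr m n hm hDS0 good hTnum
        rw [noLat_iff α β m n]
        intro k l hmem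
        rw [mem_int_upper α β hβα m n k l hT0 hSneg] at hmem
        exact hmain k l hmem
  · -- lower case : n < αm
    have hDS0 : 0 < α*m - (n:ℝ) := by nlinarith
    constructor
    · intro hNoLat
      refine Or.inl ⟨hm, by linarith [hDS0], ?_⟩
      intro p' q' hne h1 h2 hneg
      by_contra habs
      push_neg at habs
      have hv0 : 0 < α*(q':ℝ) - p' := by linarith [hneg]
      have habs' : α*(q':ℝ) - p' ≤ α*m - n := by
        rw [abs_of_neg (by linarith : (n:ℝ) - m*α < 0),
          abs_of_neg (by linarith : (p':ℝ) - q'*α < 0)] at habs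
        linarith
      have hv1 : α*(q':ℝ) - p' < α*m - n := by
        rcases lt_or_eq_of_le habs' with h | h
        · exact h
        · exfalso
          by_cases hqm : q' = m
          · subst hqm
            have : (p':ℝ) = n := by linarith
            have : p' = n := by exact_mod_cast this
            exact hne (by rw [this])
          · exact hirr (q' - m) (p' - n) (by omega) (by push_cast; linarith)
      obtain ⟨k, l, hP1, hP2, hP3, hP4⟩ :=
        lowCon α β hβα hirr m n p' q' hm h1 h2 hv0 hv1 hTnum
      exact absurd ((mem_int_lower α β hβα m n k l hT0 hSpos).mpr ⟨hP1, hP2, hP3, hP4⟩)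
        ((noLat_iff α β m n).mp hNoLat k l)
    · rintro (⟨_, hsgn, hclause⟩ | ⟨_, hsgn, _⟩)
      · rw [noLat_iff α β m n]
        intro k l hmem
        rw [mem_int_lower α β hβα m n k l hT0 hSpos] at hmem
        obtain ⟨h1, h2, h3, h4⟩ := hmem
        have hk1 : 1 ≤ k := by
          have : (0:ℝ) < (α-β)*k := by nlinarith
          have : (0:ℝ) < (k:ℝ) := by nlinarith
          exact_mod_cast this
        have hkm : k < m := by
          have : (α-β)*(k:ℝ) < (α-β)*m := by nlinarith
          have : (k:ℝ) < (m:ℝ) := by nlinarith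
          exact_mod_cast this
        have hne : (l, k) ≠ (n, m) := by
          intro h
          have := congrArg Prod.snd h
          simp at this
          omega
        have := hclause l k hne hk1 (by omega) (by linarith)
        rw [abs_of_neg (by linarith : (n:ℝ) - m*α < 0),
          abs_of_neg (by linarith : (l:ℝ) - k*α < 0)] at this
        linarith
      · exfalso; nlinarith
end

section
/- There exists t₀ > 0 such that for every (m,n) ∈ ℤ² with m ≥ 0, n ≥ 0, t_{(m,n)} ≥ t₀, and such that the interior of R_{(m,n)} contains no point of ℤ²: every (m′,n′) ∈ ℤ² with m′ ≥ 0, n′ ≥ 0 lying strictly between the two parallel lines {(x,y) ∈ ℝ² : y = αx} and {(x,y) ∈ ℝ² : y − n = α(x − m)} (i.e. in the open region bounded by them) satisfies m′ > m. -/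
lemma no_rat_root (T : ℤ) (r : ℚ) (h : r^2 - T*r + 1 = 0) (h0 : 0 < r) (h1 : r < 1) : False := by
  set p : ℤ := r.num with hp
  set d : ℤ := (r.den : ℤ) with hd
  have hd0 : (0:ℤ) < d := by rw [hd]; exact_mod_cast r.pos
  have hdQ : ((d:ℚ)) ≠ 0 := by positivity
  have hrpd : (r : ℚ) = (p:ℚ)/(d:ℚ) := by
    rw [hp, hd]; push_cast; exact (Rat.num_div_den r).symm
  have hZ : p^2 - T*p*d + d^2 = 0 := by
    have : ((p:ℚ))^2 - T*p*d + d^2 = 0 := by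
      rw [hrpd] at h
      field_simp at h
      apply mul_right_cancel₀ hdQ
      linear_combination (↑d : ℚ) * h
    exact_mod_cast this
  have hdvd : d ∣ p^2 := ⟨T*p - d, by linarith [hZ]⟩
  have hcop : Nat.Coprime r.den (p.natAbs^2) := (Nat.Coprime.pow_right _ r.reduced.symm)
  have hdvdN : r.den ∣ p.natAbs^2 := by
    have := Int.natAbs_dvd_natAbs.mpr hdvd
    simpa [hd, Int.natAbs_pow] using this
  have hden1 : r.den = 1 := Nat.eq_one_of_dvd_coprimes (Nat.Coprime.pow_left _ r.reduced) hdvdN dvd_rfl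
  have hrint : r = (p : ℚ) := by rw [hrpd, hd, hden1]; simp
  rw [hrint] at h0 h1
  have h0' : 0 < p := by exact_mod_cast h0
  have h1' : p < 1 := by exact_mod_cast h1
  omega


lemma alpha_irrational (A : Matrix (Fin 2) (Fin 2) ℤ) (hdet : A.det = 1) (lam α : ℝ)
    (hlam0 : 0 < lam) (hlam1 : lam < 1)
    (hAα0 : (A 0 0 : ℝ) + A 0 1 * α = lam)
    (hAα1 : (A 1 0 : ℝ) + A 1 1 * α = lam * α) : Irrational α := by
  have hdetZ : A 0 0 * A 1 1 - A 0 1 * A 1 0 = 1 := by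
    rw [Matrix.det_fin_two] at hdet; linarith
  have hdetR : (A 0 0 : ℝ) * (A 1 1) - (A 0 1) * (A 1 0) = 1 := by exact_mod_cast hdetZ
  have hquad : lam^2 - ((A 0 0 : ℝ) + (A 1 1)) * lam + 1 = 0 := by
    linear_combination (↑(A 1 1) - lam) * hAα0 - (↑(A 0 1) : ℝ) * hAα1 - hdetR
  rintro ⟨q, hq⟩
  set r : ℚ := A 0 0 + A 0 1 * q with hr
  have hrR : (r : ℝ) = lam := by rw [hr]; push_cast; rw [hq]; exact hAα0
  have hquadQ : r^2 - ((A 0 0 + A 1 1 : ℤ) : ℚ)*r + 1 = 0 := by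
    have : ((r:ℝ))^2 - ((A 0 0 + A 1 1 : ℤ) : ℝ) * (r:ℝ) + 1 = 0 := by
      rw [hrR]; push_cast; linarith [hquad]
    exact_mod_cast this
  have hr1 : r < 1 := by
    have : ((r:ℝ)) < ((1:ℚ):ℝ) := by rw [hrR]; norm_num; exact hlam1
    exact_mod_cast this
  exact no_rat_root _ _ hquadQ (by rw [← Rat.cast_pos (K := ℝ), hrR]; exact hlam0) hr1


lemma approx_ne {α : ℝ} (hirr : Irrational α) (k l : ℤ) (hk : k ≠ 0) : (k:ℝ)*α - l ≠ 0 := by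
  intro h
  have hk' : (k:ℝ) ≠ 0 := Int.cast_ne_zero.mpr hk
  refine hirr ⟨(l:ℚ)/(k:ℚ), ?_⟩
  push_cast
  field_simp
  linarith

lemma exists_small {α : ℝ} (hirr : Irrational α) {δ : ℝ} (hδ : 0 < δ) :
    ∃ k l : ℤ, 1 ≤ k ∧ 0 < |(k:ℝ)*α - l| ∧ |(k:ℝ)*α - l| < δ := by
  obtain ⟨n, hn⟩ := exists_nat_gt (1/δ)
  have hn0 : 0 < n + 1 := Nat.succ_pos n
  obtain ⟨j, k, hk0, _, hjk⟩ := Real.exists_int_int_abs_mul_sub_le α hn0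
  refine ⟨k, j, hk0, ?_, ?_⟩
  · exact abs_pos.mpr (approx_ne hirr k j (by omega))
  · refine lt_of_le_of_lt hjk ?_
    rw [div_lt_iff₀ (by positivity)]
    rw [div_lt_iff₀ hδ] at hn
    push_cast
    nlinarith [hδ.le]

lemma exists_approx_pos {α : ℝ} (hirr : Irrational α) {δ : ℝ} (hδ : 0 < δ) (hδ1 : δ ≤ 1) :
    ∃ k l : ℤ, 1 ≤ k ∧ 0 < (k:ℝ)*α - l ∧ (k:ℝ)*α - l < δ := by
  obtain ⟨k, l, hk1, h0, hδ'⟩ := exists_small hirr hδ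
  rcases (abs_pos.mp h0).lt_or_gt with hneg | hpos
  · -- θ < 0 : flip
    set θ := (k:ℝ)*α - l with hθ
    have hθ' : 0 < -θ := by linarith
    have habs : -θ < δ := by rw [abs_of_neg hneg] at hδ'; linarith
    set M : ℤ := ⌊1/(-θ)⌋ with hM
    have hM1 : 1 ≤ M := by
      rw [hM, Int.le_floor]
      rw [le_div_iff₀ hθ']
      push_cast
      linarith
    have hMle : (M:ℝ) ≤ 1/(-θ) := Int.floor_le _
    have hMgt : 1/(-θ) - 1 < (M:ℝ) := Int.sub_one_lt_floor _
    refine ⟨M*k, M*l - 1, by nlinarith, ?_, ?_⟩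
    · have hne : ((M*k:ℤ):ℝ)*α - ((M*l-1:ℤ):ℝ) ≠ 0 := approx_ne hirr _ _ (by nlinarith)
      have hge : (0:ℝ) ≤ ((M*k:ℤ):ℝ)*α - ((M*l-1:ℤ):ℝ) := by
        push_cast
        have key : (1/(-θ))*(-θ) = 1 := one_div_mul_cancel (ne_of_gt hθ')
        have : (M:ℝ) * (-θ) ≤ 1 := by nlinarith [mul_le_mul_of_nonneg_right hMle hθ'.le]
        rw [hθ] at this; nlinarith
      exact hge.lt_of_ne (Ne.symm hne)
    · push_cast
      have key : (1/(-θ))*(-θ) = 1 := one_div_mul_cancel (ne_of_gt hθ')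
      have : 1 - (-θ) < (M:ℝ)*(-θ) := by nlinarith [mul_lt_mul_of_pos_right hMgt hθ']
      rw [hθ] at this; nlinarith
  · exact ⟨k, l, hk1, hpos, by rwa [abs_of_pos hpos] at hδ'⟩

lemma exists_approx_neg {α : ℝ} (hirr : Irrational α) {δ : ℝ} (hδ : 0 < δ) (hδ1 : δ ≤ 1) :
    ∃ k l : ℤ, 1 ≤ k ∧ -δ < (k:ℝ)*α - l ∧ (k:ℝ)*α - l < 0 := by
  obtain ⟨k, l, hk1, h0, hδ'⟩ := exists_small hirr hδ
  rcases (abs_pos.mp h0).lt_or_gt with hneg | hpos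
  · exact ⟨k, l, hk1, by rw [abs_of_neg hneg] at hδ'; linarith, hneg⟩
  · set θ := (k:ℝ)*α - l with hθ
    have habs : θ < δ := by rw [abs_of_pos hpos] at hδ'; linarith
    set M : ℤ := ⌊1/θ⌋ with hM
    have hM1 : 1 ≤ M := by
      rw [hM, Int.le_floor]
      rw [le_div_iff₀ hpos]
      push_cast
      linarith
    have hMle : (M:ℝ) ≤ 1/θ := Int.floor_le _
    have hMgt : 1/θ - 1 < (M:ℝ) := Int.sub_one_lt_floor _
    refine ⟨M*k, M*l + 1, by nlinarith, ?_, ?_⟩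
    · push_cast
      have key : (1/θ)*θ = 1 := one_div_mul_cancel (ne_of_gt hpos)
      have : 1 - θ < (M:ℝ)*θ := by nlinarith [mul_lt_mul_of_pos_right hMgt hpos]
      rw [hθ] at this; nlinarith
    · have hne : ((M*k:ℤ):ℝ)*α - ((M*l+1:ℤ):ℝ) ≠ 0 := approx_ne hirr _ _ (by nlinarith)
      have hle : ((M*k:ℤ):ℝ)*α - ((M*l+1:ℤ):ℝ) ≤ 0 := by
        push_cast
        have key : (1/θ)*θ = 1 := one_div_mul_cancel (ne_of_gt hpos)
        have : (M:ℝ) * θ ≤ 1 := by nlinarith [mul_le_mul_of_nonneg_right hMle hpos.le]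
        rw [hθ] at this; nlinarith
      exact lt_of_le_of_ne hle hne

lemma mem_interior_Rpar {α β : ℝ} (hβα : β < α) (m n k l : ℤ)
    (h1 : tcoord α β k l ∈ Set.Ioo (min 0 (tcoord α β m n)) (max 0 (tcoord α β m n)))
    (h2 : scoord α β k l ∈ Set.Ioo (min 0 (scoord α β m n)) (max 0 (scoord α β m n))) :
    ((k:ℝ), (l:ℝ)) ∈ interior (Rpar α β m n) := by
  have hαβ : (0:ℝ) < α - β := sub_pos.mpr hβα
  set t := tcoord α β m n
  set s := scoord α β m n
  set U : Set (ℝ × ℝ) := {p | (p.2 - β*p.1)/(α-β) ∈ Set.Ioo (min 0 t) (max 0 t) ∧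
      (α*p.1 - p.2)/(α-β) ∈ Set.Ioo (min 0 s) (max 0 s)} with hU
  have hUopen : IsOpen U := by
    apply IsOpen.inter
    · exact isOpen_Ioo.preimage (by fun_prop)
    · exact isOpen_Ioo.preimage (by fun_prop)
  have hUsub : U ⊆ Rpar α β m n := by
    rintro ⟨x, y⟩ ⟨hx1, hx2⟩
    refine ⟨(y - β*x)/(α-β), (α*x - y)/(α-β), ?_, ?_, ?_⟩
    · rw [Set.uIcc_eq_union]
      rcases le_total 0 t with h | h
      · left
        rw [min_eq_left h, max_eq_right h] at hx1
        exact Set.Ioo_subset_Icc_self hx1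
      · right
        rw [min_eq_right h, max_eq_left h] at hx1
        exact Set.Ioo_subset_Icc_self hx1
    · rw [Set.uIcc_eq_union]
      rcases le_total 0 s with h | h
      · left
        rw [min_eq_left h, max_eq_right h] at hx2
        exact Set.Ioo_subset_Icc_self hx2
      · right
        rw [min_eq_right h, max_eq_left h] at hx2
        exact Set.Ioo_subset_Icc_self hx2
    · have hne : α - β ≠ 0 := ne_of_gt hαβ
      refine Prod.ext ?_ ?_ <;> simp only [] <;> field_simp <;> ring
  have : ((k:ℝ), (l:ℝ)) ∈ U := ⟨h1, h2⟩
  exact interior_maximal hUsub hUopen this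

lemma Ioo_div_neg {c x D : ℝ} (hc : 0 < c) (h1 : min 0 D < x) (h2 : x < max 0 D) :
    -x/c ∈ Set.Ioo (min 0 (-D/c)) (max 0 (-D/c)) := by
  rcases lt_trichotomy D 0 with hD | hD | hD
  · rw [min_eq_right hD.le] at h1; rw [max_eq_left hD.le] at h2
    have hD' : 0 < -D/c := div_pos (by linarith) hc
    rw [min_eq_left hD'.le, max_eq_right hD'.le]
    constructor
    · have : 0 < -x := by linarith
      positivity
    · exact (div_lt_div_iff_of_pos_right hc).mpr (by linarith)
  · subst hD; simp at h1 h2; linarith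
  · rw [min_eq_left hD.le] at h1; rw [max_eq_right hD.le] at h2
    have hD' : -D/c < 0 := by
      apply div_neg_of_neg_of_pos (by linarith) hc
    rw [min_eq_right hD'.le, max_eq_left hD'.le]
    constructor
    · exact (div_lt_div_iff_of_pos_right hc).mpr (by linarith)
    · apply div_neg_of_neg_of_pos (by linarith) hc

/-- There exists `t₀ > 0` such that for every `(m,n) ∈ ℤ²` with
`m, n ≥ 0`, `t_{(m,n)} ≥ t₀`, and such that the interior of `R_{(m,n)}` contains no point
of `ℤ²`: every `(m′,n′) ∈ ℤ²` with `m′, n′ ≥ 0` lying strictly between the parallel lines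
`y = αx` and `y − n = α(x − m)` satisfies `m′ > m`. Lying strictly between the two lines is
expressed as `min 0 (n − αm) < n′ − αm′ < max 0 (n − αm)`. -/
theorem stmt5 (A : Matrix (Fin 2) (Fin 2) ℤ) (hdet : A.det = 1)
    (lam mu α β : ℝ)
    (hlam0 : 0 < lam) (hlam1 : lam < 1) (hmu : 1 < mu)
    (hAα0 : (A 0 0 : ℝ) + A 0 1 * α = lam)
    (hAα1 : (A 1 0 : ℝ) + A 1 1 * α = lam * α)
    (hAβ0 : (A 0 0 : ℝ) + A 0 1 * β = mu)
    (hAβ1 : (A 1 0 : ℝ) + A 1 1 * β = mu * β)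
    (hβα : β < α) (hα : 0 < α) :
    ∃ t₀ > (0 : ℝ), ∀ m n : ℤ, 0 ≤ m → 0 ≤ n → t₀ ≤ tcoord α β m n →
      NoLatticeInterior α β m n →
      ∀ m' n' : ℤ, 0 ≤ m' → 0 ≤ n' →
        min 0 ((n : ℝ) - α * m) < (n' : ℝ) - α * m' →
        (n' : ℝ) - α * m' < max 0 ((n : ℝ) - α * m) →
        m < m' := by
  have hαβ : (0:ℝ) < α - β := sub_pos.mpr hβα
  have hirr : Irrational α := alpha_irrational A hdet lam α hlam0 hlam1 hAα0 hAα1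
  set δ₀ : ℝ := min 1 (α - β) with hδ₀
  have hδ₀pos : 0 < δ₀ := lt_min one_pos hαβ
  have hδ₀le1 : δ₀ ≤ 1 := min_le_left _ _
  have hδ₀leαβ : δ₀ ≤ α - β := min_le_right _ _
  obtain ⟨kp, lp, hkp, hp1, hp2⟩ := exists_approx_pos hirr hδ₀pos hδ₀le1
  obtain ⟨km, lm, hkm, hm1, hm2⟩ := exists_approx_neg hirr hδ₀pos hδ₀le1
  have hkpR : (1:ℝ) ≤ (kp:ℝ) := by exact_mod_cast hkp
  have hkmR : (1:ℝ) ≤ (km:ℝ) := by exact_mod_cast hkm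
  have hkpmax : (kp:ℝ) ≤ ((max kp km : ℤ):ℝ) := by exact_mod_cast le_max_left kp km
  have hkmmax : (km:ℝ) ≤ ((max kp km : ℤ):ℝ) := by exact_mod_cast le_max_right kp km
  refine ⟨((max kp km : ℤ):ℝ) + 1, by linarith, ?_⟩
  intro m n hm hn ht hNL m' n' hm' hn' hlo hhi
  set t := tcoord α β m n with hts
  have ht0 : (0:ℝ) < t := by linarith
  have hmin_t : min 0 t = 0 := min_eq_left ht0.le
  have hmax_t : max 0 t = t := max_eq_right ht0.le
  set D := (n:ℝ) - α*m with hD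
  have hDne : D ≠ 0 := by
    intro h
    rw [h] at hlo hhi
    simp at hlo hhi
    linarith
  have hs : scoord α β m n = -D/(α-β) := by
    rw [hD]
    unfold scoord
    ring_nf
  -- Step 1: |D| < δ₀
  have hDsmall : |D| < δ₀ := by
    by_contra hbig
    push_neg at hbig
    rcases hDne.lt_or_gt with hDneg | hDpos
    · rw [abs_of_neg hDneg] at hbig
      refine hNL ((kp:ℝ), (lp:ℝ)) ?_ ⟨kp, lp, rfl⟩
      apply mem_interior_Rpar hβα
      · rw [hmin_t, hmax_t]
        unfold tcoord
        constructor
        · apply div_pos ?_ hαβ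
          linarith [mul_nonneg hαβ.le (by linarith : (0:ℝ) ≤ (kp:ℝ) - 1), hp2, hδ₀leαβ]
        · rw [div_lt_iff₀ hαβ]
          linarith [hp1, hαβ, mul_le_mul_of_nonneg_left hkpmax hαβ.le,
            mul_le_mul_of_nonneg_left ht hαβ.le]
      · rw [hs]
        have hx1 : min 0 D < -(α*(kp:ℝ) - lp) := by
          rw [min_eq_right hDneg.le]; linarith [hp2, hbig]
        have hx2 : -(α*(kp:ℝ) - lp) < max 0 D := by
          rw [max_eq_left hDneg.le]; linarith [hp1]
        have key := Ioo_div_neg hαβ hx1 hx2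
        rw [neg_neg] at key
        unfold scoord
        exact key
    · rw [abs_of_pos hDpos] at hbig
      refine hNL ((km:ℝ), (lm:ℝ)) ?_ ⟨km, lm, rfl⟩
      apply mem_interior_Rpar hβα
      · rw [hmin_t, hmax_t]
        unfold tcoord
        constructor
        · apply div_pos ?_ hαβ
          linarith [mul_le_mul_of_nonneg_left hkmR hαβ.le, hm2, hαβ]
        · rw [div_lt_iff₀ hαβ]
          linarith [hm1, hδ₀leαβ, mul_le_mul_of_nonneg_left hkmmax hαβ.le,
            mul_le_mul_of_nonneg_left ht hαβ.le]
      · rw [hs]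
        have hx1 : min 0 D < -(α*(km:ℝ) - lm) := by
          rw [min_eq_left hDpos.le]; linarith [hm2]
        have hx2 : -(α*(km:ℝ) - lm) < max 0 D := by
          rw [max_eq_right hDpos.le]; linarith [hm1, hbig]
        have key := Ioo_div_neg hαβ hx1 hx2
        rw [neg_neg] at key
        unfold scoord
        exact key
  -- Step 2
  by_contra hlt
  push_neg at hlt
  have claim : ∀ k l : ℤ, 0 ≤ k → min 0 D < (l:ℝ) - α*k → (l:ℝ) - α*k < max 0 D →
      0 < tcoord α β k l := by
    intro k l hk0 he1 he2
    have hminD : -|D| ≤ min 0 D := le_min (by simp [abs_nonneg]) (neg_abs_le D)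
    have hmaxD : max 0 D ≤ |D| := max_le (abs_nonneg D) (le_abs_self D)
    have habs : |(l:ℝ) - α*k| < δ₀ := by
      rw [abs_lt]
      constructor <;> [linarith; linarith]
    have hene : (l:ℝ) - α*k ≠ 0 := by
      rcases hDne.lt_or_gt with h | h
      · rw [max_eq_left h.le] at he2; exact ne_of_lt he2
      · rw [min_eq_left h.le] at he1; exact ne_of_gt he1
    have hk1 : 1 ≤ k := by
      rcases eq_or_lt_of_le hk0 with h | h
      · exfalso
        have hl : l ≠ 0 := by
          intro h0
          apply hene
          rw [h0, ← h]
          simp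
        have h1l : (1:ℝ) ≤ |(l:ℝ)| := by
          have := Int.one_le_abs hl
          calc (1:ℝ) ≤ ((|l| : ℤ):ℝ) := by exact_mod_cast this
            _ = |(l:ℝ)| := by push_cast; ring
        rw [← h] at habs
        push_cast at habs
        simp at habs
        linarith
      · exact h
    have hkR : (1:ℝ) ≤ (k:ℝ) := by exact_mod_cast hk1
    unfold tcoord
    apply div_pos ?_ hαβ
    have h5 := (abs_lt.mp habs).1
    linarith [mul_le_mul_of_nonneg_left hkR hαβ.le, hδ₀leαβ]
  have h3 := claim m' n' hm' hlo hhi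
  have h4 : 0 < tcoord α β (m - m') (n - n') := by
    apply claim _ _ (by omega) <;> push_cast <;>
      rcases hDne.lt_or_gt with h | h
    · rw [min_eq_right h.le] at hlo ⊢
      rw [max_eq_left h.le] at hhi
      linarith
    · rw [min_eq_left h.le] at hlo ⊢
      rw [max_eq_right h.le] at hhi
      linarith
    · rw [min_eq_right h.le] at hlo
      rw [max_eq_left h.le] at hhi ⊢
      linarith
    · rw [min_eq_left h.le] at hlo
      rw [max_eq_right h.le] at hhi ⊢
      linarith
  have hsum : tcoord α β m' n' + tcoord α β (m - m') (n - n') = t := by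
    rw [hts]
    unfold tcoord
    rw [← add_div]
    congr 1
    push_cast
    ring
  refine hNL ((m':ℝ), (n':ℝ)) ?_ ⟨m', n', rfl⟩
  apply mem_interior_Rpar hβα
  · rw [hmin_t, hmax_t]
    exact ⟨h3, by linarith⟩
  · rw [hs]
    have key := Ioo_div_neg hαβ hlo hhi
    have hneg : -((n':ℝ) - α*m') = α*(m':ℝ) - n' := by ring
    rw [hneg] at key
    unfold scoord
    exact key
end

section
/- For every (m,n) ∈ ℤ², writing (m′,n′)ᵀ = A·(m,n)ᵀ, the following hold: (i) t_{(m′,n′)} = λ·t_{(m,n)}; (ii) n′ − αm′ has the same sign as n − αm; (iii) the interior of R_{(m′,n′)} contains a point of ℤ² if and only if the interior of R_{(m,n)} does. Consequently, the map t ↦ λ·t restricts to strictly increasing bijections of T⁻ onto T⁻ and of T⁺ onto T⁺, and for every t ∈ T one has λᵏ·t → 0 as k → +∞ and λ⁻ᵏ·t → +∞ as k → +∞. -/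
/-- `T⁻`: the set of values `t_{(m,n)} > 0` with `n − αm < 0` such that the interior of
`R_{(m,n)}` contains no point of `ℤ²`. -/
def Tminus (α β : ℝ) : Set ℝ :=
  {t | ∃ m n : ℤ, t = tcoord α β m n ∧ 0 < t ∧ (n : ℝ) - α * m < 0 ∧
    NoLatticeInterior α β m n}

/-- `T⁺`: the set of values `t_{(m,n)} > 0` with `n − αm > 0` such that the interior of
`R_{(m,n)}` contains no point of `ℤ²`. -/
def Tplus (α β : ℝ) : Set ℝ :=
  {t | ∃ m n : ℤ, t = tcoord α β m n ∧ 0 < t ∧ 0 < (n : ℝ) - α * m ∧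
    NoLatticeInterior α β m n}

/-- `T = T⁺ ∪ T⁻`. -/
def Tset (α β : ℝ) : Set ℝ := Tplus α β ∪ Tminus α β

/-! ### Auxiliary lemmas -/

lemma mul_mem_uIcc_zero' {c t x : ℝ} (hc : 0 < c) (hx : x ∈ Set.uIcc 0 t) :
    c * x ∈ Set.uIcc 0 (c * t) := by
  simp only [Set.mem_uIcc] at *
  rcases hx with ⟨h1, h2⟩ | ⟨h1, h2⟩
  · left; constructor <;> nlinarith
  · right; constructor <;> nlinarith

lemma mem_uIcc_zero_div' {c t x : ℝ} (hc : 0 < c) (hx : x ∈ Set.uIcc 0 (c * t)) :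
    x / c ∈ Set.uIcc 0 t := by
  have h2 := mul_mem_uIcc_zero' (c := c⁻¹) (inv_pos.mpr hc) hx
  rw [← mul_assoc, inv_mul_cancel₀ hc.ne', one_mul] at h2
  simpa [div_eq_inv_mul] using h2

section maps
variable {B : Matrix (Fin 2) (Fin 2) ℤ} {a b α β : ℝ}

lemma tcoord_map' (hβα : β < α)
    (h0 : (B 0 0 : ℝ) + B 0 1 * α = a) (h1 : (B 1 0 : ℝ) + B 1 1 * α = a * α)
    (h2 : (B 0 0 : ℝ) + B 0 1 * β = b) (h3 : (B 1 0 : ℝ) + B 1 1 * β = b * β)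
    (m n : ℤ) :
    tcoord α β (B 0 0 * m + B 0 1 * n) (B 1 0 * m + B 1 1 * n) = a * tcoord α β m n := by
  have hne : α - β ≠ 0 := sub_ne_zero.mpr hβα.ne'
  have e1 : (B 0 1 : ℝ) * (α - β) = a - b := by linear_combination h0 - h2
  have e2 : (B 1 1 : ℝ) * (α - β) = a * α - b * β := by linear_combination h1 - h3
  have e3 : (B 0 0 : ℝ) * (α - β) = b * α - a * β := by linear_combination α * h2 - β * h0
  have e4 : (B 1 0 : ℝ) * (α - β) = α * β * (b - a) := by linear_combination α * h3 - β * h1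
  have num : ((B 1 0 : ℝ) * m + B 1 1 * n) - β * ((B 0 0 : ℝ) * m + B 0 1 * n)
      = a * ((n : ℝ) - β * m) := by
    have key : (((B 1 0 : ℝ) * m + B 1 1 * n) - β * ((B 0 0 : ℝ) * m + B 0 1 * n)) * (α - β)
        = (a * ((n : ℝ) - β * m)) * (α - β) := by
      linear_combination (m : ℝ) * e4 + (n : ℝ) * e2 - β * m * e3 - β * n * e1
    exact mul_right_cancel₀ hne key
  unfold tcoord
  push_cast
  rw [mul_div_assoc']
  rw [show ((B 1 0 : ℝ) * m + B 1 1 * n) - β * ((B 0 0 : ℝ) * m + B 0 1 * n)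
      = a * ((n : ℝ) - β * m) from num]

lemma scoord_map' (hβα : β < α)
    (h0 : (B 0 0 : ℝ) + B 0 1 * α = a) (h1 : (B 1 0 : ℝ) + B 1 1 * α = a * α)
    (h2 : (B 0 0 : ℝ) + B 0 1 * β = b) (h3 : (B 1 0 : ℝ) + B 1 1 * β = b * β)
    (m n : ℤ) :
    scoord α β (B 0 0 * m + B 0 1 * n) (B 1 0 * m + B 1 1 * n) = b * scoord α β m n := by
  have hne : α - β ≠ 0 := sub_ne_zero.mpr hβα.ne'
  have e1 : (B 0 1 : ℝ) * (α - β) = a - b := by linear_combination h0 - h2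
  have e2 : (B 1 1 : ℝ) * (α - β) = a * α - b * β := by linear_combination h1 - h3
  have e3 : (B 0 0 : ℝ) * (α - β) = b * α - a * β := by linear_combination α * h2 - β * h0
  have e4 : (B 1 0 : ℝ) * (α - β) = α * β * (b - a) := by linear_combination α * h3 - β * h1
  have num : α * ((B 0 0 : ℝ) * m + B 0 1 * n) - ((B 1 0 : ℝ) * m + B 1 1 * n)
      = b * (α * (m : ℝ) - n) := by
    have key : (α * ((B 0 0 : ℝ) * m + B 0 1 * n) - ((B 1 0 : ℝ) * m + B 1 1 * n)) * (α - β)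
        = (b * (α * (m : ℝ) - n)) * (α - β) := by
      linear_combination α * m * e3 + α * (n : ℝ) * e1 - (m : ℝ) * e4 - (n : ℝ) * e2
    exact mul_right_cancel₀ hne key
  unfold scoord
  push_cast
  rw [mul_div_assoc']
  rw [show α * ((B 0 0 : ℝ) * m + B 0 1 * n) - ((B 1 0 : ℝ) * m + B 1 1 * n)
      = b * (α * (m : ℝ) - n) from num]

lemma sign_map' (hβα : β < α)
    (h0 : (B 0 0 : ℝ) + B 0 1 * α = a) (h1 : (B 1 0 : ℝ) + B 1 1 * α = a * α)
    (h2 : (B 0 0 : ℝ) + B 0 1 * β = b) (h3 : (B 1 0 : ℝ) + B 1 1 * β = b * β)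
    (m n : ℤ) :
    ((B 1 0 * m + B 1 1 * n : ℤ) : ℝ) - α * ((B 0 0 * m + B 0 1 * n : ℤ) : ℝ)
      = b * ((n : ℝ) - α * m) := by
  have hne : α - β ≠ 0 := sub_ne_zero.mpr hβα.ne'
  have e1 : (B 0 1 : ℝ) * (α - β) = a - b := by linear_combination h0 - h2
  have e2 : (B 1 1 : ℝ) * (α - β) = a * α - b * β := by linear_combination h1 - h3
  have e3 : (B 0 0 : ℝ) * (α - β) = b * α - a * β := by linear_combination α * h2 - β * h0
  have e4 : (B 1 0 : ℝ) * (α - β) = α * β * (b - a) := by linear_combination α * h3 - β * h1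
  push_cast
  have key : (((B 1 0 : ℝ) * m + B 1 1 * n) - α * ((B 0 0 : ℝ) * m + B 0 1 * n)) * (α - β)
      = (b * ((n : ℝ) - α * m)) * (α - β) := by
    linear_combination (m : ℝ) * e4 + (n : ℝ) * e2 - α * m * e3 - α * n * e1
  have h5 := mul_right_cancel₀ hne key
  linarith [h5]

end maps

noncomputable def Lequiv' (p q r s : ℝ) (hd : p * s - q * r ≠ 0) : (ℝ × ℝ) ≃ₗ[ℝ] (ℝ × ℝ) where
  toFun v := (p * v.1 + q * v.2, r * v.1 + s * v.2)
  invFun v := ((s * v.1 - q * v.2) / (p * s - q * r), (p * v.2 - r * v.1) / (p * s - q * r))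
  map_add' x y := by simp [Prod.ext_iff]; constructor <;> ring
  map_smul' c x := by simp [Prod.ext_iff, smul_eq_mul]; constructor <;> ring
  left_inv v := by
    simp only [Prod.ext_iff]
    constructor <;> (rw [div_eq_iff hd]; ring)
  right_inv v := by
    simp only [Prod.ext_iff]
    constructor <;> (rw [mul_div_assoc', mul_div_assoc', ← add_div, div_eq_iff hd]; ring)

noncomputable def Lhomeo' (p q r s : ℝ) (hd : p * s - q * r ≠ 0) : (ℝ × ℝ) ≃ₜ (ℝ × ℝ) :=
  (Lequiv' p q r s hd).toContinuousLinearEquiv.toHomeomorph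

lemma Lhomeo_apply' (p q r s : ℝ) (hd : p * s - q * r ≠ 0) (v : ℝ × ℝ) :
    Lhomeo' p q r s hd v = (p * v.1 + q * v.2, r * v.1 + s * v.2) := rfl

lemma image_Rpar' {α β a b : ℝ} (ha : 0 < a) (hb : 0 < b) {m n m' n' : ℤ} {p q r s : ℝ}
    (h0 : p + q * α = a) (h1 : r + s * α = a * α)
    (h2 : p + q * β = b) (h3 : r + s * β = b * β)
    (htc : tcoord α β m' n' = a * tcoord α β m n)
    (hsc : scoord α β m' n' = b * scoord α β m n) :
    (fun v : ℝ × ℝ => (p * v.1 + q * v.2, r * v.1 + s * v.2)) '' Rpar α β m n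
      = Rpar α β m' n' := by
  ext z
  constructor
  · rintro ⟨w, ⟨u, v, hu, hv, rfl⟩, rfl⟩
    refine ⟨a * u, b * v, ?_, ?_, ?_⟩
    · rw [htc]; exact mul_mem_uIcc_zero' ha hu
    · rw [hsc]; exact mul_mem_uIcc_zero' hb hv
    · simp only [Prod.ext_iff]
      constructor
      · linear_combination u * h0 + v * h2
      · linear_combination u * h1 + v * h3
  · rintro ⟨u, v, hu, hv, rfl⟩
    refine ⟨(u / a + v / b, (u / a) * α + (v / b) * β), ⟨u / a, v / b, ?_, ?_, rfl⟩, ?_⟩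
    · rw [htc] at hu; exact mem_uIcc_zero_div' ha hu
    · rw [hsc] at hv; exact mem_uIcc_zero_div' hb hv
    · simp only [Prod.ext_iff]
      have hu' : a * (u / a) = u := by field_simp
      have hv' : b * (v / b) = v := by field_simp
      constructor
      · linear_combination (u / a) * h0 + (v / b) * h2 + hu' + hv'
      · linear_combination (u / a) * h1 + (v / b) * h3 + α * hu' + β * hv'

lemma noLatt_of' {B : Matrix (Fin 2) (Fin 2) ℤ} {a b α β : ℝ} (hβα : β < α)
    (ha : 0 < a) (hb : 0 < b)
    (h0 : (B 0 0 : ℝ) + B 0 1 * α = a) (h1 : (B 1 0 : ℝ) + B 1 1 * α = a * α)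
    (h2 : (B 0 0 : ℝ) + B 0 1 * β = b) (h3 : (B 1 0 : ℝ) + B 1 1 * β = b * β)
    (m n : ℤ)
    (H : NoLatticeInterior α β (B 0 0 * m + B 0 1 * n) (B 1 0 * m + B 1 1 * n)) :
    NoLatticeInterior α β m n := by
  have hne : α - β ≠ 0 := sub_ne_zero.mpr hβα.ne'
  have e1 : (B 0 1 : ℝ) * (α - β) = a - b := by linear_combination h0 - h2
  have e2 : (B 1 1 : ℝ) * (α - β) = a * α - b * β := by linear_combination h1 - h3
  have e3 : (B 0 0 : ℝ) * (α - β) = b * α - a * β := by linear_combination α * h2 - β * h0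
  have e4 : (B 1 0 : ℝ) * (α - β) = α * β * (b - a) := by linear_combination α * h3 - β * h1
  have hdet : (B 0 0 : ℝ) * (B 1 1 : ℝ) - (B 0 1 : ℝ) * (B 1 0 : ℝ) = a * b := by
    have key : ((B 0 0 : ℝ) * B 1 1 - (B 0 1 : ℝ) * B 1 0) * ((α - β) * (α - β))
        = (a * b) * ((α - β) * (α - β)) := by
      linear_combination (B 1 1 : ℝ) * (α - β) * e3 - (B 0 1 : ℝ) * (α - β) * e4
        + (b * α - a * β) * e2 - α * β * (b - a) * e1
    exact mul_right_cancel₀ (mul_ne_zero hne hne) key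
  have hd : (B 0 0 : ℝ) * (B 1 1 : ℝ) - (B 0 1 : ℝ) * (B 1 0 : ℝ) ≠ 0 := by
    rw [hdet]; positivity
  set L := Lhomeo' (B 0 0 : ℝ) (B 0 1 : ℝ) (B 1 0 : ℝ) (B 1 1 : ℝ) hd with hL
  have himg : L '' Rpar α β m n
      = Rpar α β (B 0 0 * m + B 0 1 * n) (B 1 0 * m + B 1 1 * n) := by
    have himg2 := image_Rpar' (m := m) (n := n) (m' := B 0 0 * m + B 0 1 * n)
      (n' := B 1 0 * m + B 1 1 * n) ha hb h0 h1 h2 h3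
      (tcoord_map' hβα h0 h1 h2 h3 m n) (scoord_map' hβα h0 h1 h2 h3 m n)
    rw [← himg2]
    apply Set.image_congr
    intro v _
    rw [hL, Lhomeo_apply']
  intro z hz hlat
  obtain ⟨k, l, rfl⟩ := hlat
  have hz' : L ((k : ℝ), (l : ℝ))
      ∈ interior (Rpar α β (B 0 0 * m + B 0 1 * n) (B 1 0 * m + B 1 1 * n)) := by
    rw [← himg, ← L.image_interior]
    exact Set.mem_image_of_mem _ hz
  refine H _ hz' ⟨B 0 0 * k + B 0 1 * l, B 1 0 * k + B 1 1 * l, ?_⟩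
  rw [hL, Lhomeo_apply']
  push_cast
  rfl

set_option maxHeartbeats 1000000 in
theorem stmt6 (A : Matrix (Fin 2) (Fin 2) ℤ) (hdet : A.det = 1)
    (lam mu α β : ℝ)
    (hlam0 : 0 < lam) (hlam1 : lam < 1) (hmu : 1 < mu)
    (hAα0 : (A 0 0 : ℝ) + A 0 1 * α = lam)
    (hAα1 : (A 1 0 : ℝ) + A 1 1 * α = lam * α)
    (hAβ0 : (A 0 0 : ℝ) + A 0 1 * β = mu)
    (hAβ1 : (A 1 0 : ℝ) + A 1 1 * β = mu * β)
    (hβα : β < α) (hα : 0 < α) :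
    (∀ m n : ℤ,
      tcoord α β (A 0 0 * m + A 0 1 * n) (A 1 0 * m + A 1 1 * n) = lam * tcoord α β m n) ∧
    (∀ m n : ℤ,
      (((A 1 0 * m + A 1 1 * n : ℤ) : ℝ) - α * ((A 0 0 * m + A 0 1 * n : ℤ) : ℝ) < 0 ↔
        (n : ℝ) - α * m < 0) ∧
      (0 < ((A 1 0 * m + A 1 1 * n : ℤ) : ℝ) - α * ((A 0 0 * m + A 0 1 * n : ℤ) : ℝ) ↔
        0 < (n : ℝ) - α * m)) ∧
    (∀ m n : ℤ,
      (NoLatticeInterior α β (A 0 0 * m + A 0 1 * n) (A 1 0 * m + A 1 1 * n) ↔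
        NoLatticeInterior α β m n)) ∧
    StrictMonoOn (fun t : ℝ => lam * t) (Tset α β) ∧
    Set.BijOn (fun t : ℝ => lam * t) (Tminus α β) (Tminus α β) ∧
    Set.BijOn (fun t : ℝ => lam * t) (Tplus α β) (Tplus α β) ∧
    (∀ t ∈ Tset α β,
      Filter.Tendsto (fun k : ℕ => lam ^ k * t) Filter.atTop (nhds 0) ∧
      Filter.Tendsto (fun k : ℕ => (lam ^ k)⁻¹ * t) Filter.atTop Filter.atTop) := by
  have hmu0 : 0 < mu := lt_trans one_pos hmu
  have hdetZ : A 0 0 * A 1 1 - A 0 1 * A 1 0 = 1 := by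
    rw [Matrix.det_fin_two] at hdet; exact hdet
  have hdetR : (A 0 0 : ℝ) * A 1 1 - (A 0 1 : ℝ) * A 1 0 = 1 := by
    exact_mod_cast congrArg (Int.cast : ℤ → ℝ) hdetZ
  -- the inverse matrix
  set B : Matrix (Fin 2) (Fin 2) ℤ := !![A 1 1, -A 0 1; -A 1 0, A 0 0] with hB
  have hB00 : B 0 0 = A 1 1 := rfl
  have hB01 : B 0 1 = -A 0 1 := rfl
  have hB10 : B 1 0 = -A 1 0 := rfl
  have hB11 : B 1 1 = A 0 0 := rfl
  have hlaminv : 0 < lam⁻¹ := inv_pos.mpr hlam0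
  have hmuinv : 0 < mu⁻¹ := inv_pos.mpr hmu0
  have inv_eigen : ∀ {c x y : ℝ}, c ≠ 0 → c * x = y → x = c⁻¹ * y := by
    intro c x y hc h
    rw [← h, ← mul_assoc, inv_mul_cancel₀ hc, one_mul]
  have g0 : (B 0 0 : ℝ) + B 0 1 * α = lam⁻¹ := by
    rw [hB00, hB01]
    have key : lam * ((A 1 1 : ℝ) - A 0 1 * α) = 1 := by
      linear_combination (A 0 1 : ℝ) * hAα1 - (A 1 1 : ℝ) * hAα0 + hdetR
    push_cast
    linear_combination inv_eigen hlam0.ne' key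
  have g1 : (B 1 0 : ℝ) + B 1 1 * α = lam⁻¹ * α := by
    rw [hB10, hB11]
    have key : lam * (-(A 1 0 : ℝ) + (A 0 0 : ℝ) * α) = α := by
      linear_combination (A 1 0 : ℝ) * hAα0 - (A 0 0 : ℝ) * hAα1 + α * hdetR
    push_cast
    linear_combination inv_eigen hlam0.ne' key
  have g2 : (B 0 0 : ℝ) + B 0 1 * β = mu⁻¹ := by
    rw [hB00, hB01]
    have key : mu * ((A 1 1 : ℝ) - A 0 1 * β) = 1 := by
      linear_combination (A 0 1 : ℝ) * hAβ1 - (A 1 1 : ℝ) * hAβ0 + hdetR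
    push_cast
    linear_combination inv_eigen hmu0.ne' key
  have g3 : (B 1 0 : ℝ) + B 1 1 * β = mu⁻¹ * β := by
    rw [hB10, hB11]
    have key : mu * (-(A 1 0 : ℝ) + (A 0 0 : ℝ) * β) = β := by
      linear_combination (A 1 0 : ℝ) * hAβ0 - (A 0 0 : ℝ) * hAβ1 + β * hdetR
    push_cast
    linear_combination inv_eigen hmu0.ne' key
  -- B ∘ A = id and A ∘ B = id on ℤ²
  have hBA1 : ∀ m n : ℤ, B 0 0 * (A 0 0 * m + A 0 1 * n) + B 0 1 * (A 1 0 * m + A 1 1 * n) = m := by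
    intro m n; rw [hB00, hB01]; linear_combination m * hdetZ
  have hBA2 : ∀ m n : ℤ, B 1 0 * (A 0 0 * m + A 0 1 * n) + B 1 1 * (A 1 0 * m + A 1 1 * n) = n := by
    intro m n; rw [hB10, hB11]; linear_combination n * hdetZ
  have hAB1 : ∀ m n : ℤ, A 0 0 * (B 0 0 * m + B 0 1 * n) + A 0 1 * (B 1 0 * m + B 1 1 * n) = m := by
    intro m n; rw [hB00, hB01, hB10, hB11]; linear_combination m * hdetZ
  have hAB2 : ∀ m n : ℤ, A 1 0 * (B 0 0 * m + B 0 1 * n) + A 1 1 * (B 1 0 * m + B 1 1 * n) = n := by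
    intro m n; rw [hB00, hB01, hB10, hB11]; linear_combination n * hdetZ
  -- part (i)
  have hti : ∀ m n : ℤ,
      tcoord α β (A 0 0 * m + A 0 1 * n) (A 1 0 * m + A 1 1 * n) = lam * tcoord α β m n :=
    fun m n => tcoord_map' hβα hAα0 hAα1 hAβ0 hAβ1 m n
  have htiB : ∀ m n : ℤ,
      tcoord α β (B 0 0 * m + B 0 1 * n) (B 1 0 * m + B 1 1 * n) = lam⁻¹ * tcoord α β m n :=
    fun m n => tcoord_map' hβα g0 g1 g2 g3 m n
  -- part (ii) via sign equalities
  have hsgnA : ∀ m n : ℤ,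
      ((A 1 0 * m + A 1 1 * n : ℤ) : ℝ) - α * ((A 0 0 * m + A 0 1 * n : ℤ) : ℝ)
        = mu * ((n : ℝ) - α * m) :=
    fun m n => sign_map' hβα hAα0 hAα1 hAβ0 hAβ1 m n
  have hsgnB : ∀ m n : ℤ,
      ((B 1 0 * m + B 1 1 * n : ℤ) : ℝ) - α * ((B 0 0 * m + B 0 1 * n : ℤ) : ℝ)
        = mu⁻¹ * ((n : ℝ) - α * m) :=
    fun m n => sign_map' hβα g0 g1 g2 g3 m n
  have htii : ∀ m n : ℤ,
      (((A 1 0 * m + A 1 1 * n : ℤ) : ℝ) - α * ((A 0 0 * m + A 0 1 * n : ℤ) : ℝ) < 0 ↔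
        (n : ℝ) - α * m < 0) ∧
      (0 < ((A 1 0 * m + A 1 1 * n : ℤ) : ℝ) - α * ((A 0 0 * m + A 0 1 * n : ℤ) : ℝ) ↔
        0 < (n : ℝ) - α * m) := by
    intro m n
    rw [hsgnA m n]
    constructor
    · constructor <;> intro h <;> nlinarith
    · constructor <;> intro h <;> nlinarith
  -- part (iii)
  have htiii : ∀ m n : ℤ,
      NoLatticeInterior α β (A 0 0 * m + A 0 1 * n) (A 1 0 * m + A 1 1 * n) ↔
        NoLatticeInterior α β m n := by
    intro m n
    constructor
    · intro H
      exact noLatt_of' hβα hlam0 hmu0 hAα0 hAα1 hAβ0 hAβ1 m n H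
    · intro H
      apply noLatt_of' hβα hlaminv hmuinv g0 g1 g2 g3
      rw [hBA1 m n, hBA2 m n]
      exact H
  have htiiiB : ∀ m n : ℤ,
      NoLatticeInterior α β m n →
      NoLatticeInterior α β (B 0 0 * m + B 0 1 * n) (B 1 0 * m + B 1 1 * n) := by
    intro m n H
    apply noLatt_of' hβα hlam0 hmu0 hAα0 hAα1 hAβ0 hAβ1
    rw [hAB1 m n, hAB2 m n]
    exact H
  refine ⟨hti, htii, htiii, ?_, ?_, ?_, ?_⟩
  · -- strict mono
    intro x _ y _ hxy
    exact mul_lt_mul_of_pos_left hxy hlam0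
  · -- BijOn Tminus
    refine ⟨?_, ?_, ?_⟩
    · rintro t ⟨m, n, rfl, ht, hsgn, hnl⟩
      refine ⟨A 0 0 * m + A 0 1 * n, A 1 0 * m + A 1 1 * n, (hti m n).symm,
        mul_pos hlam0 ht, ?_, (htiii m n).mpr hnl⟩
      rw [hsgnA m n]; nlinarith
    · intro x _ y _ hxy
      exact mul_left_cancel₀ hlam0.ne' hxy
    · rintro t ⟨m, n, rfl, ht, hsgn, hnl⟩
      refine ⟨lam⁻¹ * tcoord α β m n, ⟨B 0 0 * m + B 0 1 * n, B 1 0 * m + B 1 1 * n,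
        (htiB m n).symm, mul_pos hlaminv ht, ?_, htiiiB m n hnl⟩, ?_⟩
      · rw [hsgnB m n]; nlinarith
      · show lam * (lam⁻¹ * tcoord α β m n) = tcoord α β m n
        rw [← mul_assoc, mul_inv_cancel₀ hlam0.ne', one_mul]
  · -- BijOn Tplus
    refine ⟨?_, ?_, ?_⟩
    · rintro t ⟨m, n, rfl, ht, hsgn, hnl⟩
      refine ⟨A 0 0 * m + A 0 1 * n, A 1 0 * m + A 1 1 * n, (hti m n).symm,
        mul_pos hlam0 ht, ?_, (htiii m n).mpr hnl⟩
      rw [hsgnA m n]; nlinarith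
    · intro x _ y _ hxy
      exact mul_left_cancel₀ hlam0.ne' hxy
    · rintro t ⟨m, n, rfl, ht, hsgn, hnl⟩
      refine ⟨lam⁻¹ * tcoord α β m n, ⟨B 0 0 * m + B 0 1 * n, B 1 0 * m + B 1 1 * n,
        (htiB m n).symm, mul_pos hlaminv ht, ?_, htiiiB m n hnl⟩, ?_⟩
      · rw [hsgnB m n]; nlinarith
      · show lam * (lam⁻¹ * tcoord α β m n) = tcoord α β m n
        rw [← mul_assoc, mul_inv_cancel₀ hlam0.ne', one_mul]
  · -- limits
    intro t ht
    have ht0 : 0 < t := by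
      rcases ht with ⟨m, n, heq, hpos, _⟩ | ⟨m, n, heq, hpos, _⟩ <;> exact hpos
    constructor
    · have h := (tendsto_pow_atTop_nhds_zero_of_lt_one hlam0.le hlam1).mul_const t
      simpa using h
    · have h1 : (1 : ℝ) < lam⁻¹ := one_lt_inv₀ hlam0 |>.mpr hlam1
      have h := (tendsto_pow_atTop_atTop_of_one_lt h1).atTop_mul_const ht0
      simpa [← inv_pow] using h
end

section
/- For all t₁, t₂ ∈ T with t₁ < t₂, the set {t ∈ T : t₁ < t < t₂} is finite. -/
-- coordinates identities
lemma coords_m {α β : ℝ} (h : α - β ≠ 0) (m n : ℤ) :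
    tcoord α β m n + scoord α β m n = (m : ℝ) := by
  unfold tcoord scoord; field_simp; ring

lemma coords_n {α β : ℝ} (h : α - β ≠ 0) (m n : ℤ) :
    tcoord α β m n * α + scoord α β m n * β = (n : ℝ) := by
  unfold tcoord scoord; field_simp; ring

-- no lattice point with coords strictly inside
lemma no_lattice {α β : ℝ} (hβα : β < α) {m n : ℤ} (h : NoLatticeInterior α β m n)
    (k l : ℤ)
    (ht1 : 0 < tcoord α β k l) (ht2 : tcoord α β k l < tcoord α β m n)
    (hs1 : min 0 (scoord α β m n) < scoord α β k l)
    (hs2 : scoord α β k l < max 0 (scoord α β m n)) : False := by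
  have hne : α - β ≠ 0 := sub_ne_zero.mpr hβα.ne'
  set T := tcoord α β m n with hT
  set S := scoord α β m n with hS
  set f : ℝ × ℝ → ℝ × ℝ := fun p => ((p.2 - β * p.1) / (α - β), (α * p.1 - p.2) / (α - β))
    with hf
  have hfc : Continuous f := by
    refine Continuous.prodMk ?_ ?_ <;> fun_prop
  set U := f ⁻¹' (Set.Ioo 0 T ×ˢ Set.Ioo (min 0 S) (max 0 S)) with hU
  have hUopen : IsOpen U := (isOpen_Ioo.prod isOpen_Ioo).preimage hfc
  have hUsub : U ⊆ Rpar α β m n := by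
    rintro p hp
    simp only [hU, Set.mem_preimage, Set.mem_prod, Set.mem_Ioo, hf] at hp
    obtain ⟨⟨ha1, ha2⟩, hb1, hb2⟩ := hp
    refine ⟨(p.2 - β * p.1) / (α - β), (α * p.1 - p.2) / (α - β), ?_, ?_, ?_⟩
    · rw [Set.mem_uIcc]
      exact Or.inl ⟨ha1.le, ha2.le⟩
    · rw [Set.mem_uIcc]
      rcases le_total 0 S with hS0 | hS0
      · rw [min_eq_left hS0] at hb1
        rw [max_eq_right hS0] at hb2
        exact Or.inl ⟨hb1.le, hb2.le⟩
      · rw [min_eq_right hS0] at hb1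
        rw [max_eq_left hS0] at hb2
        exact Or.inr ⟨hb1.le, hb2.le⟩
    · have hp12 : p = (p.1, p.2) := rfl
      rw [hp12]
      have e1 : (p.2 - β * p.1) / (α - β) + (α * p.1 - p.2) / (α - β) = p.1 := by
        field_simp; ring
      have e2 : (p.2 - β * p.1) / (α - β) * α + (α * p.1 - p.2) / (α - β) * β = p.2 := by
        field_simp; ring
      rw [e1, e2]
  have hmem : ((k : ℝ), (l : ℝ)) ∈ interior (Rpar α β m n) := by
    apply interior_maximal hUsub hUopen
    simp only [hU, Set.mem_preimage, hf, Set.mem_prod, Set.mem_Ioo]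
    exact ⟨⟨ht1, ht2⟩, ⟨hs1, hs2⟩⟩
  exact h _ hmem ⟨k, l, rfl⟩

lemma beta_irr (A : Matrix (Fin 2) (Fin 2) ℤ) (hdet : A.det = 1)
    (mu β : ℝ) (hmu : 1 < mu)
    (hAβ0 : (A 0 0 : ℝ) + A 0 1 * β = mu)
    (hAβ1 : (A 1 0 : ℝ) + A 1 1 * β = mu * β) : Irrational β := by
  rintro ⟨r, hr⟩
  have hdet2 : A 0 0 * A 1 1 - A 0 1 * A 1 0 = 1 := by
    rwa [Matrix.det_fin_two] at hdet
  have hdetR : (A 0 0 : ℝ) * A 1 1 - (A 0 1 : ℝ) * A 1 0 = 1 := by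
    exact_mod_cast congrArg (Int.cast : ℤ → ℝ) hdet2
  set q : ℚ := A 0 0 + A 0 1 * r with hqdef
  have hq : (q : ℝ) = mu := by
    rw [hqdef]
    push_cast [hr]
    exact hAβ0
  have hquad : mu ^ 2 - ((A 0 0 : ℝ) + A 1 1) * mu + 1 = 0 := by
    linear_combination ((A 1 1 : ℝ) - mu) * hAβ0 - (A 0 1 : ℝ) * hAβ1 - hdetR
  set t : ℤ := A 0 0 + A 1 1 with htdef
  have hqQ : q * ((t : ℚ) - q) = 1 := by
    have h1 : (q : ℝ) * ((t : ℝ) - q) = 1 := by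
      rw [hq, htdef]; push_cast; linear_combination -hquad
    exact_mod_cast h1
  -- numerator / denominator
  set n : ℤ := q.num with hn
  set d : ℤ := (q.den : ℤ) with hd
  have hd0 : 0 < d := by rw [hd]; exact_mod_cast q.pos
  have hkey : n * (t * d - n) = d ^ 2 := by
    have hqd : (n : ℚ) = q * d := by
      rw [hn, hd]
      have hden : ((q.den : ℚ)) ≠ 0 := Nat.cast_ne_zero.mpr q.den_nz
      exact (div_eq_iff hden).mp (Rat.num_div_den q)
    have : (n : ℚ) * ((t : ℚ) * d - n) = (d : ℚ) ^ 2 := by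
      rw [hqd]
      calc q * d * ((t:ℚ) * d - q * d) = (q * ((t:ℚ) - q)) * d ^ 2 := by ring
        _ = (d : ℚ) ^ 2 := by rw [hqQ]; ring
    exact_mod_cast this
  have hdvd : d ∣ n ^ 2 := ⟨n * t - d, by linear_combination -hkey⟩
  have hcop : IsCoprime (n ^ 2) d := by
    apply IsCoprime.pow_left
    rw [Int.isCoprime_iff_gcd_eq_one]
    rw [hn, hd]
    have h2 : Int.gcd q.num (q.den : ℤ) = Nat.gcd q.num.natAbs q.den := by
      simp [Int.gcd]
    rw [h2]
    exact q.reduced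
  have hunit : IsUnit d := hcop.isUnit_of_dvd' hdvd dvd_rfl
  have hd1 : d = 1 := by
    rcases Int.isUnit_iff.mp hunit with h | h
    · exact h
    · omega
  have hqn : q = (n : ℚ) := by
    rw [hn, ← Rat.num_div_den q]
    have hden1 : q.den = 1 := by
      have h3 : (q.den : ℤ) = 1 := by rw [← hd]; exact hd1
      exact_mod_cast h3
    rw [hden1]
    simp
  have hnint : n * (t - n) = 1 := by
    have : (n : ℚ) * ((t : ℚ) - n) = 1 := by rw [← hqn]; exact hqQ
    exact_mod_cast this
  have hnd : n ∣ 1 := ⟨t - n, hnint.symm⟩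
  have hmuq : mu = (n : ℝ) := by rw [← hq, hqn]; push_cast; ring
  rcases Int.isUnit_iff.mp (isUnit_of_dvd_one hnd) with h | h <;>
    rw [h] at hmuq <;> norm_num at hmuq <;> linarith

lemma exists_approx (β : ℝ) (hβ : Irrational β) (δ : ℝ) (hδ : 0 < δ) :
    ∃ k l : ℤ, 1 ≤ k ∧ 0 < (l : ℝ) - k * β ∧ (l : ℝ) - k * β < δ := by
  set G : AddSubgroup ℝ :=
    { carrier := {x | ∃ k l : ℤ, x = (l : ℝ) + k * β}
      add_mem' := by
        rintro x y ⟨k, l, rfl⟩ ⟨k', l', rfl⟩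
        exact ⟨k + k', l + l', by push_cast; ring⟩
      zero_mem' := ⟨0, 0, by norm_num⟩
      neg_mem' := by
        rintro x ⟨k, l, rfl⟩
        exact ⟨-k, -l, by push_cast; ring⟩ } with hG
  have hdense : Dense (G : Set ℝ) := by
    rcases AddSubgroup.dense_or_cyclic G with hd | ⟨a, ha⟩
    · exact hd
    · exfalso
      have h1 : (1 : ℝ) ∈ G := ⟨0, 1, by norm_num⟩
      have hb : β ∈ G := ⟨1, 0, by norm_num⟩
      rw [ha, AddSubgroup.mem_closure_singleton] at h1 hb
      obtain ⟨nn, hnn⟩ := h1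
      obtain ⟨mm, hmm⟩ := hb
      rw [zsmul_eq_mul] at hnn hmm
      have hnn0 : nn ≠ 0 := by
        rintro rfl; norm_num at hnn
      apply hβ
      refine ⟨(mm : ℚ) / (nn : ℚ), ?_⟩
      have hnnR : (nn : ℝ) ≠ 0 := Int.cast_ne_zero.mpr hnn0
      push_cast
      rw [div_eq_iff hnnR]
      have hx : β * (nn : ℝ) = (mm : ℝ) := by
        calc β * (nn : ℝ) = ((mm : ℝ) * a) * nn := by rw [hmm]
          _ = (mm : ℝ) * ((nn : ℝ) * a) := by ring
          _ = (mm : ℝ) := by rw [hnn]; ring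
      linarith [hx]
  -- get a small positive element of G
  set δ' := min δ (1 / 2) with hδ'
  have hδ'0 : 0 < δ' := lt_min hδ (by norm_num)
  obtain ⟨g, hgG, hg1, hg2⟩ : ∃ g ∈ G, 0 < g ∧ g < δ' := by
    obtain ⟨g, hgG, hg⟩ := hdense.exists_mem_open isOpen_Ioo
      (Set.nonempty_Ioo.mpr hδ'0 : (Set.Ioo 0 δ').Nonempty)
    exact ⟨g, hgG, hg.1, hg.2⟩
  obtain ⟨k, l, rfl⟩ := hgG
  have hglt1 : (l : ℝ) + k * β < 1 := lt_of_lt_of_le hg2 (le_trans (min_le_right _ _) (by norm_num))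
  have hk0 : k ≠ 0 := by
    rintro rfl
    norm_num at hg1 hglt1
    have h1 : (0 : ℤ) < l := by exact_mod_cast hg1
    have h2 : l < 1 := by exact_mod_cast hglt1
    omega
  have hgirr : Irrational ((l : ℝ) + k * β) := ((Irrational.intCast_mul hβ hk0).intCast_add l)
  rcases lt_or_gt_of_ne hk0 with hkneg | hkpos
  · -- k ≤ -1 : direct witness (-k, l)
    refine ⟨-k, l, by omega, ?_, ?_⟩
    · push_cast; linarith
    · push_cast
      calc (l : ℝ) - (-k) * β = (l : ℝ) + k * β := by ring
        _ < δ' := hg2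
        _ ≤ δ := min_le_left _ _
  · -- k ≥ 1 : flip using j = ⌊1/g⌋
    set g := (l : ℝ) + k * β with hgdef
    set j : ℤ := ⌊1 / g⌋ with hj
    have hj1 : 1 ≤ j := by
      rw [hj, Int.le_floor]
      rw [le_div_iff₀ hg1]
      push_cast; linarith
    have hjg_le : (j : ℝ) * g ≤ 1 := by
      have := Int.floor_le (1 / g)
      calc (j : ℝ) * g ≤ (1 / g) * g := by
            apply mul_le_mul_of_nonneg_right _ hg1.le
            exact this
        _ = 1 := by field_simp
    have hjg_ne : (j : ℝ) * g ≠ 1 := by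
      intro heq
      apply hgirr
      refine ⟨1 / (j : ℚ), ?_⟩
      have hjR : (j : ℝ) ≠ 0 := by
        apply Int.cast_ne_zero.mpr; omega
      push_cast
      rw [div_eq_iff hjR]
      linear_combination -heq
    have hjg_lt : 1 - (j : ℝ) * g < g := by
      have := Int.lt_floor_add_one (1 / g)
      have h2 : 1 / g < (j : ℝ) + 1 := this
      have h3 : 1 < ((j : ℝ) + 1) * g := by
        rwa [div_lt_iff₀ hg1] at h2
      nlinarith
    have hjk : 1 ≤ j * k := by
      have h4 : 1 * 1 ≤ j * k := mul_le_mul hj1 (by omega) (by omega) (by omega)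
      omega
    refine ⟨j * k, 1 - j * l, hjk, ?_, ?_⟩
    · push_cast
      have : ((1 : ℝ) - j * l) - (j * k) * β = 1 - j * g := by rw [hgdef]; ring
      rw [this]
      rcases lt_or_eq_of_le hjg_le with h | h
      · linarith
      · exact absurd h hjg_ne
    · push_cast
      have : ((1 : ℝ) - j * l) - (j * k) * β = 1 - j * g := by rw [hgdef]; ring
      rw [this]
      calc 1 - (j : ℝ) * g < g := hjg_lt
        _ < δ' := hg2
        _ ≤ δ := min_le_left _ _


/-- For all `t₁, t₂ ∈ T` with `t₁ < t₂`, the set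
`{t ∈ T : t₁ < t < t₂}` is finite. -/
theorem stmt7 (A : Matrix (Fin 2) (Fin 2) ℤ) (hdet : A.det = 1)
    (lam mu α β : ℝ)
    (hlam0 : 0 < lam) (hlam1 : lam < 1) (hmu : 1 < mu)
    (hAα0 : (A 0 0 : ℝ) + A 0 1 * α = lam)
    (hAα1 : (A 1 0 : ℝ) + A 1 1 * α = lam * α)
    (hAβ0 : (A 0 0 : ℝ) + A 0 1 * β = mu)
    (hAβ1 : (A 1 0 : ℝ) + A 1 1 * β = mu * β)
    (hβα : β < α) (hα : 0 < α)
    (t₁ t₂ : ℝ) (h₁ : t₁ ∈ Tset α β) (h₂ : t₂ ∈ Tset α β) (h₁₂ : t₁ < t₂) :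
    {t ∈ Tset α β | t₁ < t ∧ t < t₂}.Finite := by
  have hne : α - β ≠ 0 := sub_ne_zero.mpr hβα.ne'
  have hpos : 0 < α - β := sub_pos.mpr hβα
  have hβirr : Irrational β := beta_irr A hdet mu β hmu hAβ0 hAβ1
  have ht₁pos : 0 < t₁ := by
    rcases h₁ with ⟨m, n, heq, hp, _⟩ | ⟨m, n, heq, hp, _⟩ <;> exact hp
  have ht₂pos : 0 < t₂ := ht₁pos.trans h₁₂
  set δ := (α - β) * min t₁ 1 with hδdef
  have hδpos : 0 < δ := mul_pos hpos (lt_min ht₁pos one_pos)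
  obtain ⟨kp, lp, hkp, hgp1, hgp2⟩ := exists_approx β hβirr δ hδpos
  obtain ⟨km', lm, hkm', hgm1, hgm2⟩ := exists_approx (-β) hβirr.neg δ hδpos
  have hgmrw : (lm : ℝ) - km' * (-β) = (lm : ℝ) + km' * β := by ring
  rw [hgmrw] at hgm1 hgm2
  have hkpR : (1 : ℝ) ≤ (kp : ℝ) := by exact_mod_cast hkp
  have hkmR : (1 : ℝ) ≤ (km' : ℝ) := by exact_mod_cast hkm'
  have hscoord_eq : ∀ k l : ℤ, scoord α β k l = (k : ℝ) - tcoord α β k l := by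
    intro k l
    unfold scoord tcoord
    field_simp
    ring
  -- facts about the lattice point (kp, lp)
  have htp0 : 0 < tcoord α β kp lp := by
    unfold tcoord
    apply div_pos _ hpos
    nlinarith [hgp1]
  have htpm : tcoord α β kp lp < min t₁ 1 := by
    unfold tcoord
    rw [div_lt_iff₀ hpos]
    nlinarith [hgp2]
  have hsp0 : 0 < scoord α β kp lp := by
    rw [hscoord_eq]
    have : min t₁ 1 ≤ 1 := min_le_right _ _
    linarith
  have hspk : scoord α β kp lp < (kp : ℝ) := by
    rw [hscoord_eq]; linarith
  -- facts about the lattice point (-km', lm)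
  have htq0 : 0 < tcoord α β (-km') lm := by
    unfold tcoord
    apply div_pos _ hpos
    push_cast
    nlinarith [hgm1]
  have htqm : tcoord α β (-km') lm < min t₁ 1 := by
    unfold tcoord
    rw [div_lt_iff₀ hpos]
    push_cast
    nlinarith [hgm2]
  have hsq : scoord α β (-km') lm = -(km' : ℝ) - tcoord α β (-km') lm := by
    rw [hscoord_eq]; push_cast; ring
  have hsqneg : scoord α β (-km') lm < 0 := by
    rw [hsq]; linarith
  have hsqlow : -(km' : ℝ) - 1 < scoord α β (-km') lm := by
    rw [hsq]
    have : min t₁ 1 ≤ 1 := min_le_right _ _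
    linarith
  -- the bound on |scoord|
  set K : ℝ := (kp : ℝ) + (km' : ℝ) + 1 with hK
  have hK0 : 0 < K := by rw [hK]; linarith
  set C : ℝ := t₂ + K + t₂ * |α| + K * |β| with hC
  set M : ℤ := ⌈C⌉ with hM
  apply Set.Finite.subset
    ((Set.finite_Icc ((-M, -M) : ℤ × ℤ) ((M, M) : ℤ × ℤ)).image
      (fun p : ℤ × ℤ => tcoord α β p.1 p.2))
  rintro t ⟨htT, ht1, ht2⟩
  obtain ⟨m, n, heq, hsbound⟩ :
      ∃ m n : ℤ, t = tcoord α β m n ∧ |scoord α β m n| ≤ K := by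
    rcases htT with ⟨m, n, heq, h0, hsign, hNLI⟩ | ⟨m, n, heq, h0, hsign, hNLI⟩
    · -- Tplus : scoord m n < 0
      have hsneg : scoord α β m n < 0 := by
        unfold scoord
        apply div_neg_of_neg_of_pos _ hpos
        linarith
      refine ⟨m, n, heq, ?_⟩
      rw [abs_le]
      constructor
      · -- -K ≤ scoord : else use (-km', lm)
        by_contra hcon
        push_neg at hcon
        apply no_lattice hβα hNLI (-km') lm htq0 ?_ ?_ ?_
        · rw [← heq]
          have h5 : min t₁ 1 ≤ t₁ := min_le_left _ _
          linarith
        · rw [min_eq_right hsneg.le]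
          have : -K ≤ -(km' : ℝ) - 1 := by rw [hK]; linarith
          linarith
        · rw [max_eq_left hsneg.le]
          exact hsqneg
      · linarith
    · -- Tminus : scoord m n > 0
      have hspos : 0 < scoord α β m n := by
        unfold scoord
        apply div_pos _ hpos
        linarith
      refine ⟨m, n, heq, ?_⟩
      rw [abs_le]
      constructor
      · linarith
      · -- scoord ≤ K : else use (kp, lp)
        by_contra hcon
        push_neg at hcon
        apply no_lattice hβα hNLI kp lp htp0 ?_ ?_ ?_
        · rw [← heq]
          have h5 : min t₁ 1 ≤ t₁ := min_le_left _ _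
          linarith
        · rw [min_eq_left hspos.le]
          exact hsp0
        · rw [max_eq_right hspos.le]
          have : (kp : ℝ) ≤ K := by rw [hK]; linarith
          linarith
  -- now bound m and n
  have htabs : |t| ≤ t₂ := by
    rw [abs_le]; constructor <;> linarith
  have hmr : (m : ℝ) = t + scoord α β m n := by
    rw [heq]; exact (coords_m hne m n).symm
  have hnr : (n : ℝ) = t * α + scoord α β m n * β := by
    rw [heq]; exact (coords_n hne m n).symm
  have hmabs : |(m : ℝ)| ≤ C := by
    rw [hmr, hC]
    have h6 := abs_add_le t (scoord α β m n)
    have h7 : 0 ≤ t₂ * |α| := by positivity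
    have h8 : 0 ≤ K * |β| := by positivity
    calc |t + scoord α β m n| ≤ |t| + |scoord α β m n| := h6
      _ ≤ t₂ + K := by rw [heq] at htabs ⊢; linarith [htabs, hsbound]
      _ ≤ t₂ + K + t₂ * |α| + K * |β| := by linarith
  have hnabs : |(n : ℝ)| ≤ C := by
    rw [hnr, hC]
    have h6 := abs_add_le (t * α) (scoord α β m n * β)
    have h9 : |t * α| ≤ t₂ * |α| := by
      rw [abs_mul]
      exact mul_le_mul_of_nonneg_right htabs (abs_nonneg _)
    have h10 : |scoord α β m n * β| ≤ K * |β| := by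
      rw [abs_mul]
      exact mul_le_mul_of_nonneg_right hsbound (abs_nonneg _)
    have h11 : 0 ≤ t₂ + K := by linarith
    calc |t * α + scoord α β m n * β| ≤ |t * α| + |scoord α β m n * β| := h6
      _ ≤ t₂ * |α| + K * |β| := by linarith
      _ ≤ t₂ + K + t₂ * |α| + K * |β| := by linarith
  have hbox : ∀ x : ℤ, |(x : ℝ)| ≤ C → -M ≤ x ∧ x ≤ M := by
    intro x hx
    have hceil : C ≤ (M : ℝ) := Int.le_ceil C
    have h1 : (x : ℝ) ≤ (M : ℝ) := le_trans (le_abs_self _) (hx.trans hceil)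
    have h2 : -(M : ℝ) ≤ (x : ℝ) := by
      have := neg_abs_le (x : ℝ)
      linarith
    exact ⟨by exact_mod_cast h2, by exact_mod_cast h1⟩
  obtain ⟨hm1, hm2⟩ := hbox m hmabs
  obtain ⟨hn1, hn2⟩ := hbox n hnabs
  refine ⟨(m, n), ?_, heq.symm⟩
  rw [Set.mem_Icc]
  exact ⟨⟨hm1, hn1⟩, ⟨hm2, hn2⟩⟩
end

section
/- Let α > 0 be irrational with partial quotients (aᵢ) and convergent numerators and denominators (pₖ), (qₖ). A pair of integers (p, q) with q ≥ 1 is a good lower approximation of the second kind of α if and only if there exist an even integer k ≥ 0 and an integer r with 0 ≤ r ≤ a_{k+2} such that p = pₖ + r·p_{k+1} and q = qₖ + r·q_{k+1}. A pair of integers (p, q) with q ≥ 1 is a good upper approximation of the second kind of α if and only if there exist an odd integer k ≥ −1 and an integer r with 0 ≤ r ≤ a_{k+2} (and r ≥ 1 in the case k = −1) such that p = pₖ + r·p_{k+1} and q = qₖ + r·q_{k+1}. -/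
/-- `a : ℕ → ℤ` is the sequence of partial quotients of the continued fraction expansion of
`x`, given by the Gauss map. -/
def GaussCF (x : ℝ) (a : ℕ → ℤ) : Prop :=
  ∃ v : ℕ → ℝ, v 0 = x ∧ ∀ k : ℕ, a k = ⌊v k⌋ ∧ v (k + 1) = (v k - ⌊v k⌋)⁻¹

/-- One-sided best approximation, parametrized by a sign `σ`. -/
private def Best (α σ : ℝ) (P Q : ℤ) : Prop :=
  1 ≤ Q ∧ 0 < σ * ((Q : ℝ) * α - P) ∧
    ∀ p' q' : ℤ, (p', q') ≠ (P, Q) → 1 ≤ q' → q' ≤ Q → 0 < σ * ((q' : ℝ) * α - p') →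
      σ * ((Q : ℝ) * α - P) < σ * ((q' : ℝ) * α - p')

private lemma goodLower_iff (α : ℝ) (P Q : ℤ) : GoodLower α P Q ↔ Best α 1 P Q := by
  unfold GoodLower Best
  simp only [one_mul]
  constructor
  · rintro ⟨h1, h2, h3⟩
    refine ⟨h1, by linarith, fun p' q' hne hq1 hq2 hpos => ?_⟩
    have := h3 p' q' hne hq1 hq2 (by linarith)
    rw [abs_of_neg h2, abs_of_neg (by linarith : (p':ℝ) - q' * α < 0)] at this
    linarith
  · rintro ⟨h1, h2, h3⟩
    refine ⟨h1, by linarith, fun p' q' hne hq1 hq2 hneg => ?_⟩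
    have := h3 p' q' hne hq1 hq2 (by linarith)
    rw [abs_of_neg (by linarith : (P:ℝ) - Q * α < 0), abs_of_neg hneg]
    linarith

private lemma goodUpper_iff (α : ℝ) (P Q : ℤ) : GoodUpper α P Q ↔ Best α (-1) P Q := by
  unfold GoodUpper Best
  simp only [neg_one_mul, neg_sub]
  constructor
  · rintro ⟨h1, h2, h3⟩
    refine ⟨h1, h2, fun p' q' hne hq1 hq2 hpos => ?_⟩
    have := h3 p' q' hne hq1 hq2 hpos
    rwa [abs_of_pos h2, abs_of_pos hpos] at this
  · rintro ⟨h1, h2, h3⟩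
    refine ⟨h1, h2, fun p' q' hne hq1 hq2 hpos => ?_⟩
    rw [abs_of_pos h2, abs_of_pos hpos]
    exact h3 p' q' hne hq1 hq2 hpos

/-- The key inequality: among all `(p', q')` on the `σ`-side of `α` with denominator
below the next semiconvergent denominator, the semiconvergent is strictly optimal. -/
private lemma core (α σ : ℝ) (pa qa pb qb ε r p' q' : ℤ)
    (hε : ε = 1 ∨ ε = -1) (hdet : pa * qb - pb * qa = ε)
    (hqa : 0 ≤ qa) (hqb : 1 ≤ qb)
    (hA : 0 < σ * ((qa : ℝ) * α - pa)) (hB : σ * ((qb : ℝ) * α - pb) < 0)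
    (hne : (p', q') ≠ (pa + r * pb, qa + r * qb))
    (hq'1 : 1 ≤ q') (hq'le : q' ≤ qa + r * qb + qb - 1)
    (hpos' : 0 < σ * ((q' : ℝ) * α - p')) :
    σ * ((qa : ℝ) * α - pa) + r * (σ * ((qb : ℝ) * α - pb)) < σ * ((q' : ℝ) * α - p') := by
  have he2 : ε * ε = 1 := by rcases hε with h | h <;> simp [h]
  have h1 : (ε * (q' * pa - p' * qa)) * pb + (ε * (p' * qb - q' * pb)) * pa = p' := by
    linear_combination (ε * p') * hdet + p' * he2
  have h2 : (ε * (q' * pa - p' * qa)) * qb + (ε * (p' * qb - q' * pb)) * qa = q' := by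
    linear_combination (ε * q') * hdet + q' * he2
  set x : ℤ := ε * (q' * pa - p' * qa) with hx
  set y : ℤ := ε * (p' * qb - q' * pb) with hy
  have h1' : (x : ℝ) * pb + (y : ℝ) * pa = p' := by exact_mod_cast congrArg (Int.cast : ℤ → ℝ) h1
  have h2' : (x : ℝ) * qb + (y : ℝ) * qa = q' := by exact_mod_cast congrArg (Int.cast : ℤ → ℝ) h2
  set A : ℝ := σ * ((qa : ℝ) * α - pa) with hA'
  set B : ℝ := σ * ((qb : ℝ) * α - pb) with hB'
  have hval : σ * ((q' : ℝ) * α - p') = (x : ℝ) * B + (y : ℝ) * A := by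
    rw [hA', hB']; linear_combination σ * h1' - (σ * α) * h2'
  have hy1 : 1 ≤ y := by
    by_contra hc
    push_neg at hc
    have hy0 : y ≤ 0 := by omega
    have hx0 : x ≤ -1 := by
      by_contra hxc
      push_neg at hxc
      have hx0' : (0:ℝ) ≤ (x:ℝ) := by exact_mod_cast (by omega : (0:ℤ) ≤ x)
      have hy0' : (y:ℝ) ≤ 0 := by exact_mod_cast hy0
      have t1 : (x:ℝ) * B ≤ 0 := mul_nonpos_of_nonneg_of_nonpos hx0' hB.le
      have t2 : (y:ℝ) * A ≤ 0 := mul_nonpos_of_nonpos_of_nonneg hy0' hA.le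
      rw [hval] at hpos'
      linarith
    have t1 : 0 ≤ (-1 - x) * qb := mul_nonneg (by omega) (by omega)
    have t2 : 0 ≤ (-y) * qa := mul_nonneg (by omega) hqa
    nlinarith [h2]
  have hxr : x ≤ r := by
    by_contra hc
    push_neg at hc
    have t1 : 0 ≤ (x - (r+1)) * qb := mul_nonneg (by omega) (by omega)
    have t2 : 0 ≤ (y - 1) * qa := mul_nonneg (by omega) hqa
    nlinarith [h2]
  rw [hval]
  rcases eq_or_lt_of_le hxr with heq | hlt
  · have hy2 : 2 ≤ y := by
      rcases eq_or_lt_of_le hy1 with hyeq | hylt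
      · exfalso
        apply hne
        have hp' : p' = pa + r * pb := by rw [← h1, ← heq, ← hyeq]; ring
        have hq' : q' = qa + r * qb := by rw [← h2, ← heq, ← hyeq]; ring
        rw [hp', hq']
      · omega
    have hy2' : (2:ℝ) ≤ (y:ℝ) := by exact_mod_cast hy2
    have hxe : (x:ℝ) = (r:ℝ) := by exact_mod_cast congrArg (Int.cast : ℤ → ℝ) heq
    nlinarith [hA]
  · have hxr1 : (x:ℝ) ≤ (r:ℝ) - 1 := by exact_mod_cast (by omega : x ≤ r - 1)
    have hy1' : (1:ℝ) ≤ (y:ℝ) := by exact_mod_cast hy1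
    have t1 : 0 ≤ ((r:ℝ) - 1 - x) * (-B) := mul_nonneg (by linarith) (by linarith)
    have t2 : 0 ≤ ((y:ℝ) - 1) * A := mul_nonneg (by linarith) hA.le
    nlinarith [hB]

private lemma seg_pos (α σ : ℝ) (qa pa qb pb aa r : ℤ)
    (hB : σ * ((qb : ℝ) * α - pb) < 0)
    (hAB : 0 < σ * ((qa : ℝ) * α - pa) + aa * (σ * ((qb : ℝ) * α - pb)))
    (hra : r ≤ aa) :
    0 < σ * ((qa : ℝ) * α - pa) + r * (σ * ((qb : ℝ) * α - pb)) := by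
  have hrR : (r : ℝ) ≤ (aa : ℝ) := by exact_mod_cast hra
  nlinarith [hB, hAB, hrR]

private lemma best_of_seg (α σ : ℝ) (pa qa pb qb ε aa r P Q : ℤ)
    (hε : ε = 1 ∨ ε = -1) (hdet : pa * qb - pb * qa = ε)
    (hqa : 0 ≤ qa) (hqb : 1 ≤ qb)
    (hA : 0 < σ * ((qa : ℝ) * α - pa)) (hB : σ * ((qb : ℝ) * α - pb) < 0)
    (hAB : 0 < σ * ((qa : ℝ) * α - pa) + aa * (σ * ((qb : ℝ) * α - pb)))
    (hr0 : 0 ≤ r) (hra : r ≤ aa)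
    (hP : P = pa + r * pb) (hQ : Q = qa + r * qb) (hQ1 : 1 ≤ Q) :
    Best α σ P Q := by
  have hpos := seg_pos α σ qa pa qb pb aa r hB hAB hra
  have hQP : σ * ((Q : ℝ) * α - P)
      = σ * ((qa : ℝ) * α - pa) + r * (σ * ((qb : ℝ) * α - pb)) := by
    rw [hP, hQ]; push_cast; ring
  refine ⟨hQ1, by rw [hQP]; exact hpos, fun p' q' hne hq1 hq2 hpos' => ?_⟩
  rw [hQP]
  refine core α σ pa qa pb qb ε r p' q' hε hdet hqa hqb hA hB ?_ hq1 ?_ hpos'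
  · rw [hP, hQ] at hne; exact hne
  · rw [hQ] at hq2; linarith

private lemma eq_of_best_seg (α σ : ℝ) (pa qa pb qb ε aa r P Q : ℤ)
    (hε : ε = 1 ∨ ε = -1) (hdet : pa * qb - pb * qa = ε)
    (hqa : 0 ≤ qa) (hqb : 1 ≤ qb)
    (hA : 0 < σ * ((qa : ℝ) * α - pa)) (hB : σ * ((qb : ℝ) * α - pb) < 0)
    (hAB : 0 < σ * ((qa : ℝ) * α - pa) + aa * (σ * ((qb : ℝ) * α - pb)))
    (hra : r ≤ aa)
    (hQ01 : 1 ≤ qa + r * qb)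
    (hQlo : qa + r * qb ≤ Q) (hQhi : Q < qa + r * qb + qb)
    (hbest : Best α σ P Q) :
    P = pa + r * pb ∧ Q = qa + r * qb := by
  by_cases heq : (P, Q) = (pa + r * pb, qa + r * qb)
  · exact ⟨congrArg Prod.fst heq, congrArg Prod.snd heq⟩
  · exfalso
    obtain ⟨hQ1, hPQ, hmin⟩ := hbest
    have hpos := seg_pos α σ qa pa qb pb aa r hB hAB hra
    have hcast : σ * (((qa + r * qb : ℤ) : ℝ) * α - ((pa + r * pb : ℤ) : ℝ))
        = σ * ((qa : ℝ) * α - pa) + r * (σ * ((qb : ℝ) * α - pb)) := by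
      push_cast; ring
    have h1 := hmin (pa + r * pb) (qa + r * qb) (fun hc => heq hc.symm) hQ01 hQlo
      (by rw [hcast]; exact hpos)
    rw [hcast] at h1
    have h2 := core α σ pa qa pb qb ε r P Q hε hdet hqa hqb hA hB heq hQ1
      (by linarith) hPQ
    linarith

private lemma find_r (b lo Q : ℤ) (hb : 1 ≤ b) (hlo : lo ≤ Q) :
    ∃ r : ℤ, 0 ≤ r ∧ lo + r * b ≤ Q ∧ Q < lo + r * b + b := by
  have h := Int.mul_ediv_add_emod (Q - lo) b
  have h0 := Int.emod_nonneg (Q - lo) (by omega : b ≠ 0)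
  have h1 := Int.emod_lt_of_pos (Q - lo) (by omega : 0 < b)
  exact ⟨(Q - lo) / b, Int.ediv_nonneg (by omega) (by omega),
    by linarith [mul_comm ((Q - lo) / b) b], by linarith [mul_comm ((Q - lo) / b) b]⟩

private lemma find_k (q : ℕ → ℤ) (s : ℕ) (Q : ℤ)
    (hgrow : ∀ k, q k + 1 ≤ q (k + 2)) (hqs : 1 ≤ q s)
    (hbase : q s ≤ Q) : ∃ m : ℕ, q (2 * m + s) ≤ Q ∧ Q < q (2 * m + s + 2) := by
  have hg : ∀ m : ℕ, q s + m ≤ q (2 * m + s) := by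
    intro m
    induction m with
    | zero => simp
    | succ n ih =>
      have h2 := hgrow (2 * n + s)
      have he : 2 * (n + 1) + s = (2 * n + s) + 2 := by omega
      rw [he]
      push_cast
      push_cast at ih
      linarith
  have hex : ∃ m : ℕ, Q < q (2 * m + s + 2) := by
    refine ⟨Q.toNat, ?_⟩
    have h2 := hg (Q.toNat + 1)
    have he : 2 * (Q.toNat + 1) + s = 2 * Q.toNat + s + 2 := by omega
    rw [he] at h2
    have h3 : Q ≤ (Q.toNat : ℤ) := Int.self_le_toNat Q
    push_cast at h2
    linarith
  refine ⟨Nat.find hex, ?_, Nat.find_spec hex⟩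
  rcases Nat.eq_zero_or_pos (Nat.find hex) with h0 | h0
  · rw [h0]; simpa using hbase
  · have hmin := Nat.find_min hex (Nat.sub_lt h0 one_pos)
    push_neg at hmin
    have he : 2 * (Nat.find hex - 1) + s + 2 = 2 * Nat.find hex + s := by omega
    rwa [he] at hmin

/-- Let `α > 0` be irrational with partial quotients `aᵢ` and convergents
`pₖ/qₖ`. A pair `(p,q)` with `q ≥ 1` is a good lower approximation of the second kind of `α`
iff `(p,q) = (pₖ + r p_{k+1}, qₖ + r q_{k+1})` for some even `k ≥ 0` and `0 ≤ r ≤ a_{k+2}`;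
and a good upper approximation of the second kind of `α` iff the same holds for some odd
`k ≥ −1` and `0 ≤ r ≤ a_{k+2}` (with `r ≥ 1` when `k = −1`, in which case
`(p,q) = (1 + r p₀, r q₀)` since `p₋₁ = 1`, `q₋₁ = 0`). -/
theorem stmt10 (α : ℝ) (hirr : Irrational α) (hα : 0 < α)
    (a p q : ℕ → ℤ) (hcf : GaussCF α a)
    (hp0 : p 0 = a 0) (hq0 : q 0 = 1)
    (hp1 : p 1 = a 1 * a 0 + 1) (hq1 : q 1 = a 1)
    (hp : ∀ k : ℕ, p (k + 2) = a (k + 2) * p (k + 1) + p k)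
    (hq : ∀ k : ℕ, q (k + 2) = a (k + 2) * q (k + 1) + q k) :
    (∀ P Q : ℤ, 1 ≤ Q →
      (GoodLower α P Q ↔ ∃ k : ℕ, Even k ∧ ∃ r : ℤ, 0 ≤ r ∧ r ≤ a (k + 2) ∧
        P = p k + r * p (k + 1) ∧ Q = q k + r * q (k + 1))) ∧
    (∀ P Q : ℤ, 1 ≤ Q →
      (GoodUpper α P Q ↔
        ((∃ r : ℤ, 1 ≤ r ∧ r ≤ a 1 ∧ P = 1 + r * p 0 ∧ Q = r * q 0) ∨
         (∃ k : ℕ, Odd k ∧ ∃ r : ℤ, 0 ≤ r ∧ r ≤ a (k + 2) ∧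
            P = p k + r * p (k + 1) ∧ Q = q k + r * q (k + 1))))) := by
  obtain ⟨v, hv0, hva⟩ := hcf
  have hvfloor : ∀ k, a k = ⌊v k⌋ := fun k => (hva k).1
  have hirrv : ∀ k, Irrational (v k) := by
    intro k
    induction k with
    | zero => rwa [hv0]
    | succ n ih => rw [(hva n).2]; exact (ih.sub_intCast _).inv
  have hfrac : ∀ k, Int.fract (v k) = v k - (a k : ℝ) := by
    intro k; rw [Int.fract, hvfloor k]
  have ht0 : ∀ k, 0 < Int.fract (v k) := by
    intro k
    rcases lt_or_eq_of_le (Int.fract_nonneg (v k)) with h | h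
    · exact h
    · exfalso
      apply (hirrv k).ne_int ⌊v k⌋
      have := Int.fract_add_floor (v k)
      rw [← h] at this
      linarith [this]
  have ht1 : ∀ k, Int.fract (v k) < 1 := fun k => Int.fract_lt_one _
  have hvrec : ∀ k, v (k + 1) = (Int.fract (v k))⁻¹ := by
    intro k; rw [(hva k).2, Int.fract]
  have hfv : ∀ k, Int.fract (v k) * v (k + 1) = 1 := by
    intro k; rw [hvrec k]; exact mul_inv_cancel₀ (ne_of_gt (ht0 k))
  have ha1 : ∀ k, 1 ≤ a (k + 1) := by
    intro k
    rw [hvfloor (k + 1)]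
    have h1 : 1 < v (k + 1) := by
      rw [hvrec k]
      exact (one_lt_inv₀ (ht0 k)).mpr (ht1 k)
    exact Int.le_floor.mpr (by exact_mod_cast h1.le)
  have hqpos : ∀ k, 1 ≤ q k := by
    have h : ∀ k, 1 ≤ q k ∧ 1 ≤ q (k + 1) := by
      intro k
      induction k with
      | zero => exact ⟨by rw [hq0], by rw [hq1]; exact ha1 0⟩
      | succ n ih =>
        refine ⟨ih.2, ?_⟩
        rw [hq n]
        nlinarith [ha1 (n + 1), ih.1, ih.2]
    exact fun k => (h k).1
  have hgrow : ∀ k, q k + 1 ≤ q (k + 2) := by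
    intro k
    rw [hq k]
    nlinarith [ha1 (k + 1), hqpos (k + 1), hqpos k]
  have hdet : ∀ k, p k * q (k + 1) - p (k + 1) * q k = (-1) ^ (k + 1) := by
    intro k
    induction k with
    | zero => rw [hp0, hq0, hp1, hq1]; ring
    | succ n ih =>
      rw [hp n, hq n]
      have he : (-1 : ℤ) ^ (n + 1 + 1) = -(-1) ^ (n + 1) := by ring
      rw [he, ← ih]; ring
  have hepar : ∀ k : ℕ, ((-1 : ℤ) ^ (k + 1) = 1 ∨ (-1 : ℤ) ^ (k + 1) = -1) := by
    intro k
    rcases Nat.even_or_odd (k + 1) with h | h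
    · exact Or.inl h.neg_one_pow
    · exact Or.inr h.neg_one_pow
  have hrec : ∀ k, ((q (k + 2) : ℝ)) * α - p (k + 2)
      = (a (k + 2) : ℝ) * (((q (k + 1) : ℝ)) * α - p (k + 1)) + (((q k : ℝ)) * α - p k) := by
    intro k; rw [hp k, hq k]; push_cast; ring
  have hkey : ∀ k, ((q k : ℝ)) * α - p k
      = (-1) ^ k * ∏ i ∈ Finset.range (k + 1), Int.fract (v i) := by
    have hpair : ∀ k, (((q k : ℝ)) * α - p k
        = (-1) ^ k * ∏ i ∈ Finset.range (k + 1), Int.fract (v i)) ∧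
        (((q (k+1) : ℝ)) * α - p (k+1)
        = (-1) ^ (k+1) * ∏ i ∈ Finset.range (k + 2), Int.fract (v i)) := by
      intro k
      induction k with
      | zero =>
        constructor
        · rw [hq0, hp0]
          simp only [zero_add, pow_zero, one_mul, Finset.prod_range_one]
          rw [hfrac 0, hv0]
          push_cast
          ring
        · rw [hq1, hp1]
          have hx' : (α - (a 0 : ℝ)) * Int.fract (v 1) = 1 - (a 1 : ℝ) * (α - (a 0 : ℝ)) := by
            rw [← hv0, ← hfrac 0]
            have hx : Int.fract (v 0) * Int.fract (v 1) = 1 - (a 1 : ℝ) * Int.fract (v 0) := by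
              rw [hfrac 1]
              linear_combination hfv 0
            exact hx
          rw [Finset.prod_range_succ, Finset.prod_range_one]
          rw [hfrac 0, hv0]
          push_cast
          linear_combination hx'
      | succ n ih =>
        refine ⟨ih.2, ?_⟩
        have hx : Int.fract (v (n+1)) * Int.fract (v (n+2))
            = 1 - (a (n+2) : ℝ) * Int.fract (v (n+1)) := by
          rw [hfrac (n+2)]
          linear_combination hfv (n+1)
        have e2 : ∏ i ∈ Finset.range (n+3), Int.fract (v i)
            = (∏ i ∈ Finset.range (n+2), Int.fract (v i)) * Int.fract (v (n+2)) :=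
          Finset.prod_range_succ _ _
        have e1 : ∏ i ∈ Finset.range (n+2), Int.fract (v i)
            = (∏ i ∈ Finset.range (n+1), Int.fract (v i)) * Int.fract (v (n+1)) :=
          Finset.prod_range_succ _ _
        show ((q (n+2) : ℝ)) * α - p (n+2)
            = (-1) ^ (n+2) * ∏ i ∈ Finset.range (n+3), Int.fract (v i)
        rw [hrec n, ih.1, ih.2, e2, e1]
        linear_combination ((-1:ℝ)^(n+1) * ∏ i ∈ Finset.range (n+1), Int.fract (v i)) * hx
    exact fun k => (hpair k).1
  have hEpos : ∀ k, Even k → 0 < ((q k : ℝ)) * α - p k := by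
    intro k hk
    rw [hkey k, hk.neg_one_pow, one_mul]
    exact Finset.prod_pos fun i _ => ht0 i
  have hEneg : ∀ k, Odd k → ((q k : ℝ)) * α - p k < 0 := by
    intro k hk
    rw [hkey k, hk.neg_one_pow]
    have hpr : 0 < ∏ i ∈ Finset.range (k + 1), Int.fract (v i) :=
      Finset.prod_pos fun i _ => ht0 i
    nlinarith [hpr]
  -- abbreviations for lower-side (σ = 1, even k) hypotheses
  have lowA : ∀ k, Even k → 0 < (1:ℝ) * ((q k : ℝ) * α - p k) := by
    intro k hk; rw [one_mul]; exact hEpos k hk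
  have lowB : ∀ k, Even k → (1:ℝ) * ((q (k+1) : ℝ) * α - p (k+1)) < 0 := by
    intro k hk
    rw [one_mul]
    exact hEneg (k+1) (Even.add_one hk)
  have lowAB : ∀ k, Even k → 0 < (1:ℝ) * ((q k : ℝ) * α - p k)
      + (a (k+2) : ℝ) * ((1:ℝ) * ((q (k+1) : ℝ) * α - p (k+1))) := by
    intro k hk
    have hcalc : (1:ℝ) * ((q k : ℝ) * α - p k)
        + (a (k+2) : ℝ) * ((1:ℝ) * ((q (k+1) : ℝ) * α - p (k+1)))
        = ((q (k+2) : ℝ)) * α - p (k+2) := by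
      rw [hrec k]; ring
    rw [hcalc]
    exact hEpos (k+2) (by rcases hk with ⟨m, hm⟩; exact ⟨m+1, by omega⟩)
  -- abbreviations for upper-side (σ = -1, odd k) hypotheses
  have upA : ∀ k, Odd k → 0 < (-1:ℝ) * ((q k : ℝ) * α - p k) := by
    intro k hk; have := hEneg k hk; linarith
  have upB : ∀ k, Odd k → (-1:ℝ) * ((q (k+1) : ℝ) * α - p (k+1)) < 0 := by
    intro k hk
    have := hEpos (k+1) (Odd.add_one hk)
    linarith
  have upAB : ∀ k, Odd k → 0 < (-1:ℝ) * ((q k : ℝ) * α - p k)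
      + (a (k+2) : ℝ) * ((-1:ℝ) * ((q (k+1) : ℝ) * α - p (k+1))) := by
    intro k hk
    have hcalc : (-1:ℝ) * ((q k : ℝ) * α - p k)
        + (a (k+2) : ℝ) * ((-1:ℝ) * ((q (k+1) : ℝ) * α - p (k+1)))
        = -(((q (k+2) : ℝ)) * α - p (k+2)) := by
      rw [hrec k]; ring
    rw [hcalc]
    have := hEneg (k+2) (by rcases hk with ⟨m, hm⟩; exact ⟨m+1, by omega⟩)
    linarith
  -- the (-1)-row hypotheses for the upper side
  have hdet0 : (1 : ℤ) * q 0 - p 0 * 0 = 1 := by rw [hq0]; ring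
  have upA0 : 0 < (-1:ℝ) * (((0:ℤ) : ℝ) * α - ((1:ℤ) : ℝ)) := by norm_num
  have upB0 : (-1:ℝ) * ((q 0 : ℝ) * α - p 0) < 0 := by
    have := hEpos 0 Even.zero
    linarith
  have upAB0 : 0 < (-1:ℝ) * (((0:ℤ) : ℝ) * α - ((1:ℤ) : ℝ))
      + (a 1 : ℝ) * ((-1:ℝ) * ((q 0 : ℝ) * α - p 0)) := by
    have hcalc : (-1:ℝ) * (((0:ℤ) : ℝ) * α - ((1:ℤ) : ℝ))
        + (a 1 : ℝ) * ((-1:ℝ) * ((q 0 : ℝ) * α - p 0))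
        = -(((q 1 : ℝ)) * α - p 1) := by
      rw [hq1, hp1, hq0, hp0]; push_cast; ring
    rw [hcalc]
    have := hEneg 1 odd_one
    linarith
  constructor
  · -- lower approximations
    intro P Q hQ1
    rw [goodLower_iff]
    constructor
    · intro hgl
      obtain ⟨m, hkle, hklt⟩ := find_k q 0 Q hgrow (hqpos 0) (by rw [hq0]; exact hQ1)
      set k := 2 * m + 0 with hk
      have hev : Even k := ⟨m, by omega⟩
      obtain ⟨r, hr0, hrlo, hrhi⟩ := find_r (q (k+1)) (q k) Q (hqpos (k+1)) hkle
      have hra : r < a (k+2) := by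
        have h3 : q (k+2) = a (k+2) * q (k+1) + q k := hq k
        have h2 : r * q (k+1) < a (k+2) * q (k+1) := by linarith
        exact lt_of_mul_lt_mul_right h2 (by linarith [hqpos (k+1)])
      have hQ01 : 1 ≤ q k + r * q (k+1) := by
        have := mul_nonneg hr0 (by linarith [hqpos (k+1)] : (0:ℤ) ≤ q (k+1))
        linarith [hqpos k]
      have hres := eq_of_best_seg α 1 (p k) (q k) (p (k+1)) (q (k+1)) ((-1)^(k+1))
        (a (k+2)) r P Q (hepar k) (hdet k) (by linarith [hqpos k]) (hqpos (k+1))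
        (lowA k hev) (lowB k hev) (lowAB k hev) hra.le hQ01 hrlo hrhi hgl
      exact ⟨k, hev, r, hr0, hra.le, hres.1, hres.2⟩
    · rintro ⟨k, hev, r, hr0, hra, hP, hQ⟩
      exact best_of_seg α 1 (p k) (q k) (p (k+1)) (q (k+1)) ((-1)^(k+1)) (a (k+2)) r P Q
        (hepar k) (hdet k) (by linarith [hqpos k]) (hqpos (k+1))
        (lowA k hev) (lowB k hev) (lowAB k hev) hr0 hra hP hQ hQ1
  · -- upper approximations
    intro P Q hQ1
    rw [goodUpper_iff]
    constructor
    · intro hgu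
      rcases lt_or_ge Q (q 1) with hcase | hcase
      · -- k = -1 row
        have hQa1 : Q ≤ a 1 := by rw [hq1] at hcase; omega
        have hres := eq_of_best_seg α (-1) 1 0 (p 0) (q 0) 1 (a 1) Q P Q
          (Or.inl rfl) hdet0 le_rfl (by rw [hq0]) upA0 upB0 upAB0 hQa1
          (by rw [hq0, mul_one]; omega) (by rw [hq0, mul_one]; omega)
          (by rw [hq0, mul_one]; omega) hgu
        refine Or.inl ⟨Q, hQ1, hQa1, hres.1, ?_⟩
        have := hres.2
        linarith [this]
      · obtain ⟨m, hkle, hklt⟩ := find_k q 1 Q hgrow (hqpos 1) hcase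
        set k := 2 * m + 1 with hk
        have hodd : Odd k := ⟨m, by omega⟩
        obtain ⟨r, hr0, hrlo, hrhi⟩ := find_r (q (k+1)) (q k) Q (hqpos (k+1)) hkle
        have hra : r < a (k+2) := by
          have h3 : q (k+2) = a (k+2) * q (k+1) + q k := hq k
          have h2 : r * q (k+1) < a (k+2) * q (k+1) := by linarith
          exact lt_of_mul_lt_mul_right h2 (by linarith [hqpos (k+1)])
        have hQ01 : 1 ≤ q k + r * q (k+1) := by
          have := mul_nonneg hr0 (by linarith [hqpos (k+1)] : (0:ℤ) ≤ q (k+1))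
          linarith [hqpos k]
        have hres := eq_of_best_seg α (-1) (p k) (q k) (p (k+1)) (q (k+1)) ((-1)^(k+1))
          (a (k+2)) r P Q (hepar k) (hdet k) (by linarith [hqpos k]) (hqpos (k+1))
          (upA k hodd) (upB k hodd) (upAB k hodd) hra.le hQ01 hrlo hrhi hgu
        exact Or.inr ⟨k, hodd, r, hr0, hra.le, hres.1, hres.2⟩
    · rintro (⟨r, hr1, hra, hP, hQ⟩ | ⟨k, hodd, r, hr0, hra, hP, hQ⟩)
      · exact best_of_seg α (-1) 1 0 (p 0) (q 0) 1 (a 1) r P Q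
          (Or.inl rfl) hdet0 le_rfl (by rw [hq0]) upA0 upB0 upAB0 (by omega) hra
          hP (by rw [hQ]; ring) hQ1
      · exact best_of_seg α (-1) (p k) (q k) (p (k+1)) (q (k+1)) ((-1)^(k+1))
          (a (k+2)) r P Q (hepar k) (hdet k) (by linarith [hqpos k]) (hqpos (k+1))
          (upA k hodd) (upB k hodd) (upAB k hodd) hr0 hra hP hQ hQ1
end
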